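/- arXiv:1210.5731 — 8 statements merged into one kernel-verified Lean document; each statement's English description precedes it below -/
import Mathlib

section
/- Let A and B be two matrices in ℂ^{m×n}. Then there exist unitary matrices P ∈ ℂ^{m×m} and Q ∈ ℂ^{n×n} such that both U_A := P A Q ∈ ℂ^{m×n} and U_B := Q^H Bᵀ P^H ∈ ℂ^{n×m} are upper triangular matrices. -/
open Matrix

section Aux

/-- The block matrix `1 ⊕ M`. -/
def obk {k : ℕ} (M : Matrix (Fin k) (Fin k) ℂ) : Matrix (Fin (k + 1)) (Fin (k + 1)) ℂ :=
  Matrix.of (Fin.cons (Fin.cons 1 0) (fun i => Fin.cons 0 (M i)))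

@[simp] lemma obk_zero_zero {k : ℕ} (M : Matrix (Fin k) (Fin k) ℂ) : obk M 0 0 = 1 := rfl

@[simp] lemma obk_zero_succ {k : ℕ} (M : Matrix (Fin k) (Fin k) ℂ) (j : Fin k) :
    obk M 0 j.succ = 0 := by simp [obk]

@[simp] lemma obk_succ_zero {k : ℕ} (M : Matrix (Fin k) (Fin k) ℂ) (i : Fin k) :
    obk M i.succ 0 = 0 := by simp [obk]

@[simp] lemma obk_succ_succ {k : ℕ} (M : Matrix (Fin k) (Fin k) ℂ) (i j : Fin k) :
    obk M i.succ j.succ = M i j := by simp [obk]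

lemma obk_conjT {k : ℕ} (M : Matrix (Fin k) (Fin k) ℂ) : (obk M)ᴴ = obk Mᴴ := by
  ext i j
  induction i using Fin.cases <;> induction j using Fin.cases <;>
    simp [Matrix.conjTranspose_apply]

lemma obk_mul {k : ℕ} (M N : Matrix (Fin k) (Fin k) ℂ) : obk M * obk N = obk (M * N) := by
  ext i j
  induction i using Fin.cases <;> induction j using Fin.cases <;>
    simp [Matrix.mul_apply, Fin.sum_univ_succ]

lemma obk_one {k : ℕ} : obk (1 : Matrix (Fin k) (Fin k) ℂ) = 1 := by
  ext i j
  induction i using Fin.cases <;> induction j using Fin.cases <;>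
    simp [Matrix.one_apply, Fin.succ_ne_zero, (Fin.succ_ne_zero _).symm, Fin.succ_inj]

lemma obk_mem {k : ℕ} {M : Matrix (Fin k) (Fin k) ℂ} (hM : M ∈ Matrix.unitaryGroup (Fin k) ℂ) :
    obk M ∈ Matrix.unitaryGroup (Fin (k + 1)) ℂ := by
  rw [Matrix.mem_unitaryGroup_iff'] at hM ⊢
  rw [Matrix.star_eq_conjTranspose, obk_conjT, ← Matrix.star_eq_conjTranspose, obk_mul, hM,
    obk_one]

lemma obk_entry_succ_succ {a b : ℕ} (M : Matrix (Fin a) (Fin a) ℂ) (N : Matrix (Fin b) (Fin b) ℂ)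
    (X : Matrix (Fin (a + 1)) (Fin (b + 1)) ℂ) (i : Fin a) (j : Fin b) :
    (obk M * X * obk N) i.succ j.succ = (M * X.submatrix Fin.succ Fin.succ * N) i j := by
  simp [Matrix.mul_apply, Fin.sum_univ_succ, Finset.mul_sum, Finset.sum_mul, mul_assoc]

lemma obk_entry_succ_zero {a b : ℕ} (M : Matrix (Fin a) (Fin a) ℂ) (N : Matrix (Fin b) (Fin b) ℂ)
    (X : Matrix (Fin (a + 1)) (Fin (b + 1)) ℂ) (hX : ∀ k : Fin a, X k.succ 0 = 0) (i : Fin a) :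
    (obk M * X * obk N) i.succ 0 = 0 := by
  simp [Matrix.mul_apply, Fin.sum_univ_succ, hX]

/-- Any nonzero vector is, up to a nonzero scalar, the first column of a unitary matrix. -/
lemma exists_unitary_col {k : ℕ} (x : Fin (k + 1) → ℂ) (hx : x ≠ 0) :
    ∃ Q : Matrix (Fin (k + 1)) (Fin (k + 1)) ℂ, Q ∈ Matrix.unitaryGroup (Fin (k + 1)) ℂ ∧
      ∃ c : ℂ, c ≠ 0 ∧ ∀ i, Q i 0 = c * x i := by
  set x' : EuclideanSpace ℂ (Fin (k + 1)) := WithLp.toLp 2 x with hx'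
  have hx'0 : x' ≠ 0 := fun h => hx (by simpa [hx'] using congrArg WithLp.ofLp h)
  have hnorm : ‖x'‖ ≠ 0 := norm_ne_zero_iff.mpr hx'0
  set c : ℂ := ((‖x'‖ : ℝ) : ℂ)⁻¹ with hc'
  have hc : c ≠ 0 := by
    simp [hc', hnorm]
  set q : EuclideanSpace ℂ (Fin (k + 1)) := c • x' with hq'
  have hqnorm : ‖q‖ = 1 := by
    rw [hq', norm_smul, hc']
    simp [abs_of_nonneg (norm_nonneg x')]
    field_simp
  have horth : Orthonormal ℂ (Set.restrict {(0 : Fin (k + 1))} (fun _ : Fin (k + 1) => q)) := by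
    rw [orthonormal_iff_ite]
    rintro ⟨i, hi⟩ ⟨j, hj⟩
    simp only [Set.mem_singleton_iff] at hi hj
    subst hi; subst hj
    simp [Set.restrict, inner_self_eq_norm_sq_to_K, hqnorm]
  have card : Module.finrank ℂ (EuclideanSpace ℂ (Fin (k + 1))) = Fintype.card (Fin (k + 1)) := by
    simp
  obtain ⟨b, hb⟩ := Orthonormal.exists_orthonormalBasis_extension_of_card_eq card horth
  have hb0 : b 0 = q := hb 0 rfl
  refine ⟨Matrix.of fun i j => b j i, ?_, c, hc, ?_⟩
  · rw [Matrix.mem_unitaryGroup_iff']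
    ext i j
    have horthb := orthonormal_iff_ite.mp b.orthonormal i j
    rw [PiLp.inner_apply] at horthb
    simp only [Matrix.mul_apply, Matrix.star_apply, Matrix.of_apply, Matrix.one_apply]
    simpa [RCLike.inner_apply, mul_comm] using horthb
  · intro i
    have : b 0 i = q i := by rw [hb0]
    simp only [Matrix.of_apply, this, hq']
    rfl

/-- First step of periodic Schur: common "eigenpair" of directions. -/
lemma exists_pair (m₀ n₀ : ℕ) (A B : Matrix (Fin (m₀ + 1)) (Fin (n₀ + 1)) ℂ) :
    ∃ (p : Fin (m₀ + 1) → ℂ) (q : Fin (n₀ + 1) → ℂ) (α β : ℂ),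
      p ≠ 0 ∧ q ≠ 0 ∧ A.mulVec q = α • p ∧ Bᵀ.mulVec p = β • q := by
  obtain ⟨μ, hμ⟩ := Module.End.exists_eigenvalue ((Bᵀ * A).mulVecLin)
  obtain ⟨v, hv⟩ := hμ.exists_hasEigenvector
  obtain ⟨μ', hμ'⟩ := Module.End.exists_eigenvalue ((A * Bᵀ).mulVecLin)
  obtain ⟨u, hu⟩ := hμ'.exists_hasEigenvector
  have hveq : Bᵀ.mulVec (A.mulVec v) = μ • v := by
    have h := hv.apply_eq_smul
    rw [Matrix.mulVecLin_apply] at h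
    rw [Matrix.mulVec_mulVec, h]
  have hueq : A.mulVec (Bᵀ.mulVec u) = μ' • u := by
    have h := hu.apply_eq_smul
    rw [Matrix.mulVecLin_apply] at h
    rw [Matrix.mulVec_mulVec, h]
  by_cases hAv : A.mulVec v = 0
  · by_cases hBu : Bᵀ.mulVec u = 0
    · exact ⟨u, v, 0, 0, hu.right, hv.right, by simp [hAv], by simp [hBu]⟩
    · exact ⟨u, Bᵀ.mulVec u, μ', 1, hu.right, hBu, hueq, by simp⟩
  · exact ⟨A.mulVec v, v, 1, μ, hAv, hv.right, by simp, hveq⟩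

end Aux

/-- **Simultaneous triangularization (periodic Schur-type decomposition).**
For any `A, B ∈ ℂ^{m×n}` there exist unitary matrices `P ∈ ℂ^{m×m}` and
`Q ∈ ℂ^{n×n}` such that `U_A := P A Q` and `U_B := Qᴴ Bᵀ Pᴴ` are both
upper triangular. -/
theorem exists_unitary_triangularization (m n : ℕ) (A B : Matrix (Fin m) (Fin n) ℂ) :
    ∃ (P : Matrix (Fin m) (Fin m) ℂ) (Q : Matrix (Fin n) (Fin n) ℂ),
      P ∈ Matrix.unitaryGroup (Fin m) ℂ ∧
      Q ∈ Matrix.unitaryGroup (Fin n) ℂ ∧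
      (∀ i : Fin m, ∀ j : Fin n, (j : ℕ) < (i : ℕ) → (P * A * Q) i j = 0) ∧
      (∀ i : Fin n, ∀ j : Fin m, (j : ℕ) < (i : ℕ) → (Qᴴ * Bᵀ * Pᴴ) i j = 0) := by
  induction m generalizing n with
  | zero =>
    exact ⟨1, 1, one_mem _, one_mem _, fun i => i.elim0, fun i j => j.elim0⟩
  | succ m₀ ih =>
    cases n with
    | zero =>
      exact ⟨1, 1, one_mem _, one_mem _, fun i j => j.elim0, fun i => i.elim0⟩
    | succ n₀ =>
      obtain ⟨p, q, α, β, hp, hq, hA, hB⟩ := exists_pair m₀ n₀ A B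
      obtain ⟨P₂, hP₂, cp, hcp, hpcol⟩ := exists_unitary_col p hp
      obtain ⟨Q₁, hQ₁, cq, hcq, hqcol⟩ := exists_unitary_col q hq
      have hP₂' : star P₂ * P₂ = 1 := Matrix.mem_unitaryGroup_iff'.mp hP₂
      have hQ₁' : star Q₁ * Q₁ = 1 := Matrix.mem_unitaryGroup_iff'.mp hQ₁
      set C : Matrix (Fin (m₀ + 1)) (Fin (n₀ + 1)) ℂ := P₂ᴴ * A * Q₁ with hC
      set D : Matrix (Fin (n₀ + 1)) (Fin (m₀ + 1)) ℂ := Q₁ᴴ * Bᵀ * P₂ with hD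
      -- first column of A * Q₁ is proportional to first column of P₂
      have hAQ : ∀ j, (A * Q₁) j 0 = (cq * α * cp⁻¹) * P₂ j 0 := by
        intro j
        have h1 : (A * Q₁) j 0 = cq * (A.mulVec q) j := by
          rw [Matrix.mul_apply]
          simp only [hqcol]
          simp [Matrix.mulVec, dotProduct, Finset.mul_sum]
          ring_nf
          exact Finset.sum_congr rfl fun k _ => by ring
        rw [h1, hA, hpcol j]
        simp only [Pi.smul_apply, smul_eq_mul]
        field_simp
      have hBP : ∀ j, (Bᵀ * P₂) j 0 = (cp * β * cq⁻¹) * Q₁ j 0 := by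
        intro j
        have h1 : (Bᵀ * P₂) j 0 = cp * (Bᵀ.mulVec p) j := by
          rw [Matrix.mul_apply]
          simp only [hpcol]
          simp [Matrix.mulVec, dotProduct, Finset.mul_sum]
          ring_nf
          exact Finset.sum_congr rfl fun k _ => by ring
        rw [h1, hB, hqcol j]
        simp only [Pi.smul_apply, smul_eq_mul]
        field_simp
      have hC0 : ∀ i : Fin m₀, C i.succ 0 = 0 := by
        intro i
        rw [hC, Matrix.mul_assoc, Matrix.mul_apply]
        have : ∀ k, P₂ᴴ i.succ k * (A * Q₁) k 0
            = (cq * α * cp⁻¹) * ((star P₂) i.succ k * P₂ k 0) := by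
          intro k
          rw [hAQ k, Matrix.star_eq_conjTranspose]
          ring
        rw [Finset.sum_congr rfl fun k _ => this k, ← Finset.mul_sum]
        have h2 : ∑ k, (star P₂) i.succ k * P₂ k 0 = (star P₂ * P₂) i.succ 0 :=
          (Matrix.mul_apply).symm
        rw [h2, hP₂', Matrix.one_apply_ne (Fin.succ_ne_zero i), mul_zero]
      have hD0 : ∀ i : Fin n₀, D i.succ 0 = 0 := by
        intro i
        rw [hD, Matrix.mul_assoc, Matrix.mul_apply]
        have : ∀ k, Q₁ᴴ i.succ k * (Bᵀ * P₂) k 0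
            = (cp * β * cq⁻¹) * ((star Q₁) i.succ k * Q₁ k 0) := by
          intro k
          rw [hBP k, Matrix.star_eq_conjTranspose]
          ring
        rw [Finset.sum_congr rfl fun k _ => this k, ← Finset.mul_sum]
        have h2 : ∑ k, (star Q₁) i.succ k * Q₁ k 0 = (star Q₁ * Q₁) i.succ 0 :=
          (Matrix.mul_apply).symm
        rw [h2, hQ₁', Matrix.one_apply_ne (Fin.succ_ne_zero i), mul_zero]
      obtain ⟨P', Q', hP', hQ', htriA, htriB⟩ :=
        ih n₀ (C.submatrix Fin.succ Fin.succ) ((D.submatrix Fin.succ Fin.succ)ᵀ)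
      have hP₂H : P₂ᴴ ∈ Matrix.unitaryGroup (Fin (m₀ + 1)) ℂ := by
        rw [← Matrix.star_eq_conjTranspose]
        exact Unitary.star_mem hP₂
      refine ⟨obk P' * P₂ᴴ, Q₁ * obk Q', mul_mem (obk_mem hP') hP₂H,
        mul_mem hQ₁ (obk_mem hQ'), ?_, ?_⟩
      · have hEq : obk P' * P₂ᴴ * A * (Q₁ * obk Q') = obk P' * C * obk Q' := by
          rw [hC]; simp only [Matrix.mul_assoc]
        rw [hEq]
        intro i j hij
        induction i using Fin.cases with
        | zero => simp at hij
        | succ i =>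
          induction j using Fin.cases with
          | zero => exact obk_entry_succ_zero P' Q' C hC0 i
          | succ j =>
            rw [obk_entry_succ_succ]
            exact htriA i j (by simpa using hij)
      · have hEq : (Q₁ * obk Q')ᴴ * Bᵀ * (obk P' * P₂ᴴ)ᴴ = obk Q'ᴴ * D * obk P'ᴴ := by
          rw [hD]
          simp only [Matrix.conjTranspose_mul, Matrix.conjTranspose_conjTranspose, obk_conjT,
            Matrix.mul_assoc]
        rw [hEq]
        intro i j hij
        induction i using Fin.cases with
        | zero => simp at hij
        | succ i =>
          induction j using Fin.cases with
          | zero => exact obk_entry_succ_zero Q'ᴴ P'ᴴ D hD0 i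
          | succ j =>
            rw [obk_entry_succ_succ]
            have := htriB i j (by simpa using hij)
            rwa [Matrix.transpose_transpose] at this
end

section
/- Let A, B ∈ ℂ^{m×n}, let P ∈ ℂ^{m×m} and Q ∈ ℂ^{n×n} be unitary matrices such that U_A := P A Q and U_B := Q^H Bᵀ P^H are upper triangular, and let 𝒫 be the mn×mn commutation (Kronecker permutation) matrix. Then (Bᵀ ⊗ A) 𝒫 = (Q ⊗ P^H) (U_A ⊗ U_B) 𝒫 (Q^H ⊗ P). -/
open Matrix Kronecker

private lemma mul_submatrix_id_aux {l p q r : Type*} [Fintype p]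
    (X : Matrix l p ℂ) (Y : Matrix p q ℂ) (f : r → q) :
    X * Y.submatrix id f = (X * Y).submatrix id f := by
  ext a b
  simp [Matrix.mul_apply]

/-- `vec X` stacks the columns of `X` into a (product-indexed) column vector:
the entry of `vec X` at index `(j, i)` is `X i j`. -/
def vec {m n : ℕ} (X : Matrix (Fin m) (Fin n) ℂ) : Fin n × Fin m → ℂ :=
  fun p => X p.2 p.1

/-- **Part 2 of Lemma 2.** If `P, Q` are unitary with `U_A := P A Q` and
`U_B := Qᴴ Bᵀ Pᴴ` upper triangular, and `K` is the commutation matrix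
(characterized by `K vec X = vec Xᵀ` for all `X ∈ ℂ^{m×n}`), then
`(Bᵀ ⊗ A) K = (Q ⊗ Pᴴ) ((U_A ⊗ U_B) K) (Qᴴ ⊗ P)`, where `U_A ⊗ U_B` is
read under the canonical identification of index orders (a `prodComm` reindex). -/
theorem kronecker_comm_unitary_conjugation (m n : ℕ) (A B : Matrix (Fin m) (Fin n) ℂ)
    (P : Matrix (Fin m) (Fin m) ℂ) (Q : Matrix (Fin n) (Fin n) ℂ)
    (hP : P ∈ Matrix.unitaryGroup (Fin m) ℂ)
    (hQ : Q ∈ Matrix.unitaryGroup (Fin n) ℂ)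
    (hUA : ∀ i : Fin m, ∀ j : Fin n, (j : ℕ) < (i : ℕ) → (P * A * Q) i j = 0)
    (hUB : ∀ i : Fin n, ∀ j : Fin m, (j : ℕ) < (i : ℕ) → (Qᴴ * Bᵀ * Pᴴ) i j = 0)
    (K : Matrix (Fin m × Fin n) (Fin n × Fin m) ℂ)
    (hK : ∀ X : Matrix (Fin m) (Fin n) ℂ, K *ᵥ _root_.vec X = _root_.vec Xᵀ) :
    (Bᵀ ⊗ₖ A) * K =
      (Q ⊗ₖ Pᴴ) *
        ((Matrix.reindex (Equiv.prodComm (Fin m) (Fin n)) (Equiv.prodComm (Fin n) (Fin m))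
            ((P * A * Q) ⊗ₖ (Qᴴ * Bᵀ * Pᴴ))) * K) *
        (Qᴴ ⊗ₖ P) := by
  have hQ1 : Q * Qᴴ = 1 := by
    simpa [Matrix.star_eq_conjTranspose] using Matrix.mem_unitaryGroup_iff.mp hQ
  have hP2 : Pᴴ * P = 1 := by
    simpa [Matrix.star_eq_conjTranspose] using Matrix.mem_unitaryGroup_iff'.mp hP
  set σ : Fin n × Fin m ≃ Fin m × Fin n := Equiv.prodComm (Fin n) (Fin m) with hσ
  -- explicit form of K
  have hKe : ∀ (i a : Fin m) (j b : Fin n),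
      K (i, j) (b, a) = if a = i ∧ b = j then 1 else 0 := by
    intro i a j b
    have h := congrFun (hK (Matrix.of fun i' j' => if (j', i') = (b, a) then (1 : ℂ) else 0))
      (i, j)
    simp only [Matrix.mulVec, _root_.vec, dotProduct, Matrix.transpose_apply, Matrix.of_apply] at h
    rw [Finset.sum_eq_single (b, a)] at h
    · simpa [Prod.ext_iff, eq_comm, and_comm] using h
    · intro q _ hq
      have : ¬ ((q.1, q.2) = (b, a)) := by simpa [Prod.ext_iff] using fun h1 h2 => hq (by
        cases q; simp_all)
      simp [this]
    · intro h; exact absurd (Finset.mem_univ _) h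
  -- multiplying by K on the right is a column permutation
  have hmul : ∀ M : Matrix (Fin n × Fin m) (Fin m × Fin n) ℂ,
      M * K = M.submatrix id ⇑σ := by
    intro M
    ext ⟨j, i⟩ ⟨j', i'⟩
    simp only [Matrix.mul_apply, Matrix.submatrix_apply, id_eq]
    rw [Finset.sum_eq_single (i', j')]
    · simp [hKe, hσ]
    · intro q _ hq
      rcases q with ⟨a, b⟩
      have : ¬ (i' = a ∧ j' = b) := by
        intro ⟨h1, h2⟩; exact hq (by simp [h1, h2])
      simp [hKe, this]
    · intro h; exact absurd (Finset.mem_univ _) h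
  have hR : (Matrix.reindex (Equiv.prodComm (Fin m) (Fin n)) (Equiv.prodComm (Fin n) (Fin m))
      ((P * A * Q) ⊗ₖ (Qᴴ * Bᵀ * Pᴴ))) =
      (Qᴴ * Bᵀ * Pᴴ) ⊗ₖ (P * A * Q) := by
    ext ⟨a, b⟩ ⟨c, d⟩
    simp [Matrix.reindex_apply, Matrix.submatrix_apply, mul_comm]
  have hZ : (Qᴴ ⊗ₖ P) = ((P ⊗ₖ Qᴴ).submatrix id ⇑σ).submatrix ⇑σ id := by
    ext ⟨j, i⟩ ⟨j', i'⟩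
    simp [hσ, mul_comm]
  have key : (Q ⊗ₖ Pᴴ) * (((Qᴴ * Bᵀ * Pᴴ) ⊗ₖ (P * A * Q)) * (P ⊗ₖ Qᴴ)) = Bᵀ ⊗ₖ A := by
    have c1 : (Q ⊗ₖ Pᴴ) * (Qᴴ ⊗ₖ P) = 1 := by
      rw [← Matrix.mul_kronecker_mul, hQ1, hP2, Matrix.one_kronecker_one]
    have c2 : (Pᴴ ⊗ₖ Q) * (P ⊗ₖ Qᴴ) = 1 := by
      rw [← Matrix.mul_kronecker_mul, hP2, hQ1, Matrix.one_kronecker_one]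
    rw [Matrix.mul_kronecker_mul, Matrix.mul_kronecker_mul]
    simp only [← Matrix.mul_assoc]
    rw [c1, Matrix.one_mul, Matrix.mul_assoc, c2, Matrix.mul_one]
  rw [hmul, hR, hmul, hZ,
    Matrix.mul_assoc, Matrix.submatrix_mul_equiv, Matrix.submatrix_id_id,
    mul_submatrix_id_aux, mul_submatrix_id_aux, ← Matrix.mul_assoc, Matrix.mul_assoc,
    key]
end

section
/- Let A, B ∈ ℂ^{n×n} and let 𝒫 be the n²×n² commutation matrix. Let λ₁, …, λₙ be the eigenvalues of AᵀB (listed with algebraic multiplicity). Then the set of eigenvalues of the matrix (Bᵀ ⊗ A) 𝒫 equals { λᵢ : 1 ≤ i ≤ n } ∪ { μ ∈ ℂ : μ² = λᵢ λⱼ for some 1 ≤ i < j ≤ n }, i.e., it consists of the λᵢ together with both square roots ±√(λᵢλⱼ) of each product λᵢλⱼ with i < j. -/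
open Matrix Kronecker Polynomial

namespace SKCaux


open Matrix Polynomial


/-! ### Generic multiset facts -/

lemma exists_fn (s : Multiset ℂ) :
    ∃ f : Fin (Multiset.card s) → ℂ, Finset.univ.val.map f = s := by
  have hl : s.toList.length = Multiset.card s := Multiset.length_toList s
  refine ⟨fun i => s.toList.get (Fin.cast hl.symm i), ?_⟩
  have h1 : (Finset.univ.val.map fun i : Fin (Multiset.card s) =>
      s.toList.get (Fin.cast hl.symm i)) =
      ((List.ofFn fun i : Fin (Multiset.card s) => s.toList.get (Fin.cast hl.symm i)) :
        Multiset ℂ) := by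
    rw [← Fin.univ_val_map]
  rw [h1]
  have h2 : (List.ofFn fun i : Fin (Multiset.card s) => s.toList.get (Fin.cast hl.symm i))
      = s.toList := by
    apply List.ext_getElem
    · simp [hl]
    · intro i hi1 hi2
      simp [List.get]
  rw [h2, Multiset.coe_toList]

lemma aeval_psum {σ : Type*} [Fintype σ] (f : σ → ℂ) (k : ℕ) :
    MvPolynomial.aeval f (MvPolynomial.psum σ ℂ k) = ((Finset.univ.val.map f).map (· ^ k)).sum := by
  rw [MvPolynomial.psum, map_sum]
  simp only [map_pow, MvPolynomial.aeval_X]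
  rw [Multiset.map_map]
  rfl

/-- Newton's identity for multisets over ℂ. -/
lemma newton_multiset (s : Multiset ℂ) (k : ℕ) :
    (k : ℂ) * s.esymm k = (-1) ^ (k + 1) *
      ∑ a ∈ Finset.filter (fun a => a.1 < k) (Finset.HasAntidiagonal.antidiagonal k),
        (-1) ^ a.1 * s.esymm a.1 * ((s.map (· ^ a.2)).sum) := by
  obtain ⟨f, hf⟩ := exists_fn s
  have h := congrArg (MvPolynomial.aeval f) (MvPolynomial.mul_esymm_eq_sum (Fin (Multiset.card s)) ℂ k)
  simp only [_root_.map_mul, map_natCast, map_pow, map_neg, _root_.map_one, map_sum,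
    MvPolynomial.aeval_esymm_eq_multiset_esymm, aeval_psum, hf] at h
  convert h using 2

lemma esymm_eq_of_psum_eq {N : ℕ} {s t : Multiset ℂ}
    (hs : Multiset.card s = N) (ht : Multiset.card t = N)
    (h : ∀ k, 1 ≤ k → k ≤ N → (s.map (· ^ k)).sum = (t.map (· ^ k)).sum) :
    ∀ k, k ≤ N → s.esymm k = t.esymm k := by
  intro k
  induction k using Nat.strong_induction_on with
  | _ k ih =>
    intro hkN
    rcases Nat.eq_zero_or_pos k with rfl | hk
    · simp [Multiset.esymm, Multiset.powersetCard_zero_left]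
    · have h1 := newton_multiset s k
      have h2 := newton_multiset t k
      have hsum : ∑ a ∈ Finset.filter (fun a => a.1 < k) (Finset.HasAntidiagonal.antidiagonal k),
            (-1 : ℂ) ^ a.1 * s.esymm a.1 * ((s.map (· ^ a.2)).sum)
          = ∑ a ∈ Finset.filter (fun a => a.1 < k) (Finset.HasAntidiagonal.antidiagonal k),
            (-1 : ℂ) ^ a.1 * t.esymm a.1 * ((t.map (· ^ a.2)).sum) := by
        apply Finset.sum_congr rfl
        intro a ha
        simp only [Finset.mem_filter, Finset.HasAntidiagonal.mem_antidiagonal] at ha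
        have ha2 : 1 ≤ a.2 := by omega
        have ha2' : a.2 ≤ N := by omega
        rw [ih a.1 ha.2 (by omega), h a.2 ha2 ha2']
      have hk0 : (k : ℂ) ≠ 0 := Nat.cast_ne_zero.mpr (by omega)
      have hfin : (k : ℂ) * s.esymm k = (k : ℂ) * t.esymm k := by
        rw [h1, h2, hsum]
      exact mul_left_cancel₀ hk0 hfin

lemma prod_X_sub_C_eq_of_psum_eq {N : ℕ} {s t : Multiset ℂ}
    (hs : Multiset.card s = N) (ht : Multiset.card t = N)
    (h : ∀ k, 1 ≤ k → k ≤ N → (s.map (· ^ k)).sum = (t.map (· ^ k)).sum) :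
    (s.map fun a => X - C a).prod = (t.map fun a => X - C a).prod := by
  have hesymm := esymm_eq_of_psum_eq hs ht h
  ext j
  rcases le_or_gt j N with hj | hj
  · rw [Multiset.prod_X_sub_C_coeff s (by omega), Multiset.prod_X_sub_C_coeff t (by omega),
      hs, ht, hesymm (N - j) (by omega)]
  · have hdeg : ∀ u : Multiset ℂ, Multiset.card u = N →
        ((u.map fun a => X - C a).prod).natDegree < j := by
      intro u hu
      have : ((u.map fun a => X - C a).prod).natDegree =
          (Multiset.map natDegree (u.map fun a => X - C a)).sum :=
        natDegree_multiset_prod_of_monic _ (by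
          intro f hf
          obtain ⟨a, _, rfl⟩ := Multiset.mem_map.mp hf
          exact monic_X_sub_C a)
      rw [this, Multiset.map_map]
      simp only [Function.comp_def, natDegree_X_sub_C]
      rw [Multiset.map_const', Multiset.sum_replicate, smul_eq_mul, mul_one, hu]
      exact hj
    rw [coeff_eq_zero_of_natDegree_lt (hdeg s hs), coeff_eq_zero_of_natDegree_lt (hdeg t ht)]


variable {m : Type*} [Fintype m] [DecidableEq m]

lemma eval_charpoly (M : Matrix m m ℂ) (x : ℂ) :
    M.charpoly.eval x = (scalar m x - M).det := by
  rw [Matrix.charpoly, eval_det, matPolyEquiv_charmatrix]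
  congr 1
  rw [eval_sub, eval_X, eval_C]

lemma mem_spectrum_iff_eval (M : Matrix m m ℂ) (x : ℂ) :
    x ∈ spectrum ℂ M ↔ M.charpoly.eval x = 0 := by
  rw [spectrum.mem_iff, Matrix.isUnit_iff_isUnit_det, isUnit_iff_ne_zero, not_not,
    eval_charpoly]
  have halg : algebraMap ℂ (Matrix m m ℂ) x = scalar m x := rfl
  rw [halg]


lemma prod_map_neg_eq (s : Multiset ℂ) (f : ℂ → ℂ) :
    (s.map fun a => -(f a)).prod = (-1) ^ Multiset.card s * (s.map f).prod := by
  have : (s.map fun a => -(f a)) = s.map fun a => (-1) * f a := by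
    simp
  rw [this, Multiset.prod_map_mul, Multiset.map_const', Multiset.prod_replicate]

/-- det of `M - scalar z` as product over the charpoly roots. -/
lemma det_sub_scalar (M : Matrix m m ℂ) (z : ℂ) :
    (M - scalar m z).det = ((M.charpoly.roots).map fun r => r - z).prod := by
  have hcard : Multiset.card M.charpoly.roots = Fintype.card m := by
    rw [splits_iff_card_roots.mp (IsAlgClosed.splits M.charpoly),
      Matrix.charpoly_natDegree_eq_dim]
  have h1 : M - scalar m z = -(scalar m z - M) := (neg_sub _ _).symm
  rw [h1, Matrix.det_neg, ← eval_charpoly]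
  have h2 : M.charpoly = ((M.charpoly.roots).map fun a => X - C a).prod :=
    (IsAlgClosed.splits _).eq_prod_roots_of_monic M.charpoly_monic
  conv_lhs => rw [h2]
  rw [eval_multiset_prod, Multiset.map_map]
  simp only [Function.comp_def, eval_sub, eval_X, eval_C]
  have h3 : ((M.charpoly.roots).map fun r => r - z)
      = (M.charpoly.roots).map fun r => -(z - r) := by
    simp
  rw [h3, prod_map_neg_eq, hcard]

lemma charpoly_pow (M : Matrix m m ℂ) (k : ℕ) (hk : 0 < k) :
    (M ^ k).charpoly = (((M.charpoly.roots).map (· ^ k)).map fun a => X - C a).prod := by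
  have hcard : Multiset.card M.charpoly.roots = Fintype.card m := by
    rw [splits_iff_card_roots.mp (IsAlgClosed.splits M.charpoly),
      Matrix.charpoly_natDegree_eq_dim]
  apply Polynomial.funext
  intro x
  rw [eval_charpoly, eval_multiset_prod, Multiset.map_map, Multiset.map_map]
  simp only [Function.comp_def, eval_sub, eval_X, eval_C]
  -- q = X^k - C x over ℂ
  set q : ℂ[X] := X ^ k - C x with hq
  have hqm : q.Monic := monic_X_pow_sub_C x (by omega)
  have hqd : Multiset.card q.roots = k := by
    rw [splits_iff_card_roots.mp (IsAlgClosed.splits q), hq, natDegree_X_pow_sub_C]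
  have hqprod : q = ((q.roots).map fun a => X - C a).prod :=
    (IsAlgClosed.splits _).eq_prod_roots_of_monic hqm
  -- step 1 : scalar x - M^k = -(aeval M q)
  have halg : algebraMap ℂ (Matrix m m ℂ) x = scalar m x := rfl
  have e1 : scalar m x - M ^ k = -(Polynomial.aeval M q) := by
    rw [hq]
    simp only [map_sub, map_pow, Polynomial.aeval_X, Polynomial.aeval_C, halg]
    rw [neg_sub]
  rw [e1, Matrix.det_neg]
  set l : List ℂ := q.roots.toList with hldef
  have hlcoe : (l : Multiset ℂ) = q.roots := Multiset.coe_toList _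
  -- det (aeval M q) as a list product
  have e2 : Polynomial.aeval M q = (l.map fun z => M - scalar m z).prod := by
    conv_lhs => rw [hqprod, ← hlcoe]
    rw [Multiset.map_coe, Multiset.prod_coe, map_list_prod, List.map_map]
    congr 1
    apply List.map_congr_left
    intro z _
    simp only [Function.comp_apply, map_sub, Polynomial.aeval_X, Polynomial.aeval_C]
    rfl
  have e3 : (Polynomial.aeval M q).det = (l.map fun z => (M - scalar m z).det).prod := by
    rw [e2]
    have := (List.prod_hom (l.map fun z => M - scalar m z) (Matrix.detMonoidHom (n := m) (R := ℂ))).symm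
    simp only [Matrix.coe_detMonoidHom] at this
    rw [this, List.map_map]
    rfl
  have e4 : (Polynomial.aeval M q).det
      = ((q.roots).map fun z => ((M.charpoly.roots).map fun r => r - z).prod).prod := by
    rw [e3, ← hlcoe, Multiset.map_coe, Multiset.prod_coe]
    congr 1
    apply List.map_congr_left
    intro z _
    exact det_sub_scalar M z
  rw [e4, Multiset.prod_map_prod_map]
  have e5 : ∀ r : ℂ, ((q.roots).map fun z => r - z).prod = r ^ k - x := by
    intro r
    have : q.eval r = ((q.roots).map fun a => r - a).prod := by
      conv_lhs => rw [hqprod]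
      rw [eval_multiset_prod, Multiset.map_map]
      simp only [Function.comp_def, eval_sub, eval_X, eval_C]
    rw [← this, hq, eval_sub, eval_pow, eval_X, eval_C]
  have e6 : ((M.charpoly.roots).map fun r => ((q.roots).map fun z => r - z).prod)
      = (M.charpoly.roots).map fun r => r ^ k - x := Multiset.map_congr rfl fun r _ => e5 r
  rw [e6]
  have e7 : ((M.charpoly.roots).map fun r => x - r ^ k)
      = (M.charpoly.roots).map fun r => -(r ^ k - x) := by simp
  rw [e7, prod_map_neg_eq, hcard]

lemma trace_pow {m : Type*} [Fintype m] [DecidableEq m] (M : Matrix m m ℂ) (k : ℕ)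
    (hk : 0 < k) :
    (M ^ k).trace = ((M.charpoly.roots).map (· ^ k)).sum := by
  rw [Matrix.trace_eq_sum_roots_charpoly, charpoly_pow M k hk, roots_multiset_prod_X_sub_C]


variable {n : ℕ} (A B : Matrix (Fin n) (Fin n) ℂ)

lemma kron_mulVec (Y : Matrix (Fin n) (Fin n) ℂ) :
    (Bᵀ ⊗ₖ A) *ᵥ _root_.vec Y = _root_.vec (A * Y * B) := by
  funext p
  obtain ⟨j, i⟩ := p
  simp only [Matrix.mulVec, dotProduct, _root_.vec, Matrix.kroneckerMap_apply,
    Matrix.transpose_apply, Matrix.mul_apply]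
  rw [Fintype.sum_prod_type]
  simp_rw [Finset.sum_mul]
  apply Finset.sum_congr rfl
  intro l _
  apply Finset.sum_congr rfl
  intro k _
  ring

section withK

variable (K : Matrix (Fin n × Fin n) (Fin n × Fin n) ℂ)

lemma T_mulVec (hK : ∀ X : Matrix (Fin n) (Fin n) ℂ, K *ᵥ _root_.vec X = _root_.vec Xᵀ)
    (X : Matrix (Fin n) (Fin n) ℂ) :
    ((Bᵀ ⊗ₖ A) * K) *ᵥ _root_.vec X = _root_.vec (A * Xᵀ * B) := by
  rw [← Matrix.mulVec_mulVec, hK, kron_mulVec]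

lemma T_sq (hK : ∀ X : Matrix (Fin n) (Fin n) ℂ, K *ᵥ _root_.vec X = _root_.vec Xᵀ)
    (X : Matrix (Fin n) (Fin n) ℂ) :
    (((Bᵀ ⊗ₖ A) * K) ^ 2) *ᵥ _root_.vec X = _root_.vec ((A * Bᵀ) * X * (Aᵀ * B)) := by
  rw [pow_two, ← Matrix.mulVec_mulVec, T_mulVec A B K hK, T_mulVec A B K hK]
  congr 1
  rw [Matrix.transpose_mul, Matrix.transpose_mul, Matrix.transpose_transpose]
  noncomm_ring

lemma T_pow_even (hK : ∀ X : Matrix (Fin n) (Fin n) ℂ, K *ᵥ _root_.vec X = _root_.vec Xᵀ) (k : ℕ) (X : Matrix (Fin n) (Fin n) ℂ) :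
    (((Bᵀ ⊗ₖ A) * K) ^ (2 * k)) *ᵥ _root_.vec X = _root_.vec ((A * Bᵀ) ^ k * X * (Aᵀ * B) ^ k) := by
  induction k generalizing X with
  | zero => simp [Matrix.one_mulVec]
  | succ k ih =>
    have h2 : 2 * (k + 1) = 2 * k + 2 := by ring
    rw [h2, pow_add, ← Matrix.mulVec_mulVec, T_sq A B K hK, ih]
    congr 1
    rw [pow_succ (A * Bᵀ) k, pow_succ' (Aᵀ * B) k]
    noncomm_ring
  
lemma T_pow_odd (hK : ∀ X : Matrix (Fin n) (Fin n) ℂ, K *ᵥ _root_.vec X = _root_.vec Xᵀ) (k : ℕ) (X : Matrix (Fin n) (Fin n) ℂ) :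
    (((Bᵀ ⊗ₖ A) * K) ^ (2 * k + 1)) *ᵥ _root_.vec X
      = _root_.vec ((A * Bᵀ) ^ k * (A * Xᵀ * B) * (Aᵀ * B) ^ k) := by
  rw [pow_succ, ← Matrix.mulVec_mulVec, T_mulVec A B K hK, T_pow_even A B K hK]


/-- entries of `(T^m)` via its action on basis vectors. -/
lemma diag_entry (M : Matrix (Fin n × Fin n) (Fin n × Fin n) ℂ) (p : Fin n × Fin n) :
    M p p = (M *ᵥ Pi.single p 1) p := by
  rw [Matrix.mulVec_single]
  simp

/-- `Pi.single (j,i) 1 = _root_.vec (E i j)` where `E i j` is the standard basis matrix. -/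
lemma single_eq_vec (i j : Fin n) :
    (Pi.single (j, i) 1 : Fin n × Fin n → ℂ) = _root_.vec (Matrix.single i j 1) := by
  funext q
  obtain ⟨l, k⟩ := q
  rw [Pi.single_apply]
  by_cases h1 : k = i <;> by_cases h2 : l = j <;>
    simp [_root_.vec, Matrix.single, Prod.ext_iff, h1, h2, eq_comm, and_comm]

lemma mul_std_mul (P Q : Matrix (Fin n) (Fin n) ℂ) (i j a b : Fin n) :
    (P * Matrix.single i j (1 : ℂ) * Q) a b = P a i * Q j b := by
  simp only [Matrix.mul_apply, Matrix.single, Matrix.of_apply, ite_mul, one_mul,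
    zero_mul, mul_ite, mul_one, mul_zero, ite_and]
  simp [Finset.sum_ite_eq, ite_mul]

lemma std_transpose (i j : Fin n) :
    (Matrix.single i j (1 : ℂ))ᵀ = Matrix.single j i 1 := by
  ext a b
  simp [Matrix.single, and_comm]

lemma trace_T_even (hK : ∀ X : Matrix (Fin n) (Fin n) ℂ, K *ᵥ _root_.vec X = _root_.vec Xᵀ) (k : ℕ) :
    Matrix.trace (((Bᵀ ⊗ₖ A) * K) ^ (2 * k))
      = Matrix.trace ((A * Bᵀ) ^ k) * Matrix.trace ((Aᵀ * B) ^ k) := by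
  have h : ∀ p : Fin n × Fin n, ((((Bᵀ ⊗ₖ A) * K) ^ (2 * k))) p p
      = ((A * Bᵀ) ^ k) p.2 p.2 * ((Aᵀ * B) ^ k) p.1 p.1 := by
    rintro ⟨j, i⟩
    rw [diag_entry (((Bᵀ ⊗ₖ A) * K) ^ (2 * k)) (j, i), single_eq_vec, T_pow_even A B K hK]
    show ((A * Bᵀ) ^ k * Matrix.single i j (1 : ℂ) * (Aᵀ * B) ^ k) i j = _
    rw [mul_std_mul]
  have h2 : Matrix.trace (((Bᵀ ⊗ₖ A) * K) ^ (2 * k))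
      = ∑ p : Fin n × Fin n, ((A * Bᵀ) ^ k) p.2 p.2 * ((Aᵀ * B) ^ k) p.1 p.1 := by
    rw [Matrix.trace]
    exact Finset.sum_congr rfl (fun p _ => h p)
  rw [h2, Matrix.trace, Matrix.trace, Finset.sum_mul_sum, Fintype.sum_prod_type,
    Finset.sum_comm]
  apply Finset.sum_congr rfl
  intro i _
  apply Finset.sum_congr rfl
  intro j _
  rfl

lemma mul_pow_comm_helper (P Q : Matrix (Fin n) (Fin n) ℂ) (m : ℕ) :
    (Q * P) ^ (m + 1) = Q * (P * Q) ^ m * P := by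
  induction m with
  | zero => simp
  | succ m ih =>
    rw [pow_succ, ih, pow_succ]
    noncomm_ring

lemma trace_pow_mul_comm (P Q : Matrix (Fin n) (Fin n) ℂ) (m : ℕ) (hm : 0 < m) :
    Matrix.trace ((P * Q) ^ m) = Matrix.trace ((Q * P) ^ m) := by
  obtain ⟨m', rfl⟩ : ∃ m', m = m' + 1 := ⟨m - 1, by omega⟩
  rw [mul_pow_comm_helper, Matrix.mul_assoc, Matrix.trace_mul_comm, pow_succ,
    Matrix.mul_assoc]

lemma trace_ABt_pow (m : ℕ) (hm : 0 < m) :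
    Matrix.trace ((A * Bᵀ) ^ m) = Matrix.trace ((Aᵀ * B) ^ m) := by
  have h1 : (Aᵀ * B) ^ m = ((Bᵀ * A) ^ m)ᵀ := by
    rw [Matrix.transpose_pow, Matrix.transpose_mul, Matrix.transpose_transpose]
  rw [h1, Matrix.trace_transpose, trace_pow_mul_comm A Bᵀ m hm]

lemma A_pow_comm (k : ℕ) : A * (Bᵀ * A) ^ k = (A * Bᵀ) ^ k * A := by
  induction k with
  | zero => simp
  | succ k ih =>
    rw [pow_succ, pow_succ, ← Matrix.mul_assoc, ih]
    noncomm_ring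

lemma trace_T_odd (hK : ∀ X : Matrix (Fin n) (Fin n) ℂ, K *ᵥ _root_.vec X = _root_.vec Xᵀ) (k : ℕ) :
    Matrix.trace (((Bᵀ ⊗ₖ A) * K) ^ (2 * k + 1))
      = Matrix.trace ((Aᵀ * B) ^ (2 * k + 1)) := by
  set P' := (A * Bᵀ) ^ k * A with hP'
  set Q' := B * (Aᵀ * B) ^ k with hQ'
  have h : ∀ p : Fin n × Fin n, ((((Bᵀ ⊗ₖ A) * K) ^ (2 * k + 1))) p p
      = P' p.2 p.1 * Q' p.2 p.1 := by
    rintro ⟨j, i⟩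
    rw [diag_entry (((Bᵀ ⊗ₖ A) * K) ^ (2 * k + 1)) (j, i), single_eq_vec,
      T_pow_odd A B K hK]
    show ((A * Bᵀ) ^ k * (A * (Matrix.single i j (1 : ℂ))ᵀ * B) * (Aᵀ * B) ^ k) i j = _
    rw [std_transpose]
    have heq : (A * Bᵀ) ^ k * (A * Matrix.single j i (1 : ℂ) * B) * (Aᵀ * B) ^ k
        = P' * Matrix.single j i (1 : ℂ) * Q' := by
      rw [hP', hQ']
      noncomm_ring
    rw [heq, mul_std_mul]
  have hsum : Matrix.trace (((Bᵀ ⊗ₖ A) * K) ^ (2 * k + 1)) = Matrix.trace (P' * Q'ᵀ) := by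
    have h2 : Matrix.trace (((Bᵀ ⊗ₖ A) * K) ^ (2 * k + 1))
        = ∑ p : Fin n × Fin n, P' p.2 p.1 * Q' p.2 p.1 := by
      rw [Matrix.trace]
      exact Finset.sum_congr rfl (fun p _ => h p)
    rw [h2, Matrix.trace, Fintype.sum_prod_type, Finset.sum_comm]
    apply Finset.sum_congr rfl
    intro i _
    show _ = (P' * Q'ᵀ) i i
    rw [Matrix.mul_apply]
    apply Finset.sum_congr rfl
    intro j _
    rw [Matrix.transpose_apply]
  rw [hsum]
  -- P' * Q'ᵀ = (A * Bᵀ) ^ (2k+1)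
  have hQT : Q'ᵀ = (Bᵀ * A) ^ k * Bᵀ := by
    rw [hQ', Matrix.transpose_mul, Matrix.transpose_pow, Matrix.transpose_mul,
      Matrix.transpose_transpose]
  have hcomm := A_pow_comm A B k
  have hPQ : P' * Q'ᵀ = (A * Bᵀ) ^ (2 * k + 1) := by
    rw [hQT, hP']
    have : (A * Bᵀ) ^ k * A * ((Bᵀ * A) ^ k * Bᵀ)
        = (A * Bᵀ) ^ k * (A * (Bᵀ * A) ^ k) * Bᵀ := by noncomm_ring
    rw [this, hcomm]
    have h2 : 2 * k + 1 = k + k + 1 := by ring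
    rw [h2, pow_add, pow_add, pow_one]
    noncomm_ring
  rw [hPQ]
  exact trace_ABt_pow A B (2 * k + 1) (by omega)

end withK


lemma sum_split {n : ℕ} {M : Type*} [AddCommMonoid M] (g : Fin n × Fin n → M) :
    ∑ p : Fin n × Fin n, g p =
      (∑ i : Fin n, g (i, i)) +
      ((∑ p ∈ Finset.univ.filter (fun p : Fin n × Fin n => p.1 < p.2), g p) +
       (∑ p ∈ Finset.univ.filter (fun p : Fin n × Fin n => p.1 < p.2), g (p.2, p.1))) := by
  classical
  rw [← Finset.sum_filter_add_sum_filter_not Finset.univ (fun p : Fin n × Fin n => p.1 = p.2) g]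
  congr 1
  · -- diagonal
    apply Finset.sum_nbij' (i := fun p : Fin n × Fin n => p.1) (j := fun i : Fin n => (i, i))
    · intro a _; exact Finset.mem_univ _
    · intro i _
      simp
    · intro p hp
      simp only [Finset.mem_filter] at hp
      exact Prod.ext rfl hp.2
    · intro i _; rfl
    · intro p hp
      simp only [Finset.mem_filter] at hp
      rw [show ((p.1 : Fin n), p.1) = p from Prod.ext rfl hp.2]
  · -- off-diagonal
    rw [← Finset.sum_filter_add_sum_filter_not
      (Finset.univ.filter (fun p : Fin n × Fin n => ¬p.1 = p.2))
      (fun p : Fin n × Fin n => p.1 < p.2) g]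
    congr 1
    · congr 1
      ext p
      simp only [Finset.mem_filter, Finset.mem_univ, true_and, Fin.lt_def, Fin.ext_iff]
      omega
    · have hset : (Finset.univ.filter (fun p : Fin n × Fin n => ¬p.1 = p.2)).filter
          (fun p : Fin n × Fin n => ¬p.1 < p.2)
          = Finset.univ.filter (fun p : Fin n × Fin n => p.2 < p.1) := by
        ext p
        simp only [Finset.mem_filter, Finset.mem_univ, true_and, Fin.lt_def, Fin.ext_iff]
        omega
      rw [hset]
      apply Finset.sum_nbij' (i := fun p : Fin n × Fin n => (p.2, p.1))
        (j := fun p : Fin n × Fin n => (p.2, p.1))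
      · intro p hp
        simp only [Finset.mem_filter, Finset.mem_univ, true_and] at hp ⊢
        exact hp
      · intro p hp
        simp only [Finset.mem_filter, Finset.mem_univ, true_and] at hp ⊢
        exact hp
      · intro p _; rfl
      · intro p _; rfl
      · intro p _; rfl


end SKCaux

/-- **Part 3 of Lemma 2.** If `λ₁, …, λₙ` are the eigenvalues of `AᵀB` (with
algebraic multiplicity, i.e. the charpoly factors as `∏ (X - λᵢ)`), and `K` is
the commutation matrix (`K _root_.vec X = _root_.vec Xᵀ` for all `X`), then the spectrum of
`(Bᵀ ⊗ A) K` is `{λᵢ} ∪ {±√(λᵢλⱼ) : i < j}`, the latter described as all `μ`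
with `μ² = λᵢ λⱼ` for some `i < j`. -/
theorem spectrum_kronecker_comm (n : ℕ) (A B : Matrix (Fin n) (Fin n) ℂ)
    (K : Matrix (Fin n × Fin n) (Fin n × Fin n) ℂ)
    (hK : ∀ X : Matrix (Fin n) (Fin n) ℂ, K *ᵥ _root_.vec X = _root_.vec Xᵀ)
    (lam : Fin n → ℂ)
    (hlam : (Aᵀ * B).charpoly = ∏ i, (Polynomial.X - Polynomial.C (lam i))) :
    spectrum ℂ ((Bᵀ ⊗ₖ A) * K) =
      Set.range lam ∪ {mu : ℂ | ∃ i j : Fin n, i < j ∧ mu ^ 2 = lam i * lam j} := by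
  classical
  have hrootsC : (Aᵀ * B).charpoly.roots = Finset.univ.val.map lam := by
    rw [hlam]
    have h1 : (∏ i, (X - C (lam i)))
        = ((Finset.univ.val.map lam).map (fun a => X - C a)).prod := by
      rw [Multiset.map_map]
      rfl
    rw [h1, roots_multiset_prod_X_sub_C]
  have htraceC : ∀ m : ℕ, 0 < m → Matrix.trace ((Aᵀ * B) ^ m) = ∑ i, lam i ^ m := by
    intro m hm
    rw [SKCaux.trace_pow _ m hm, hrootsC, Multiset.map_map]
    rfl
  have hodd : ∀ k : ℕ,
      Matrix.trace (((Bᵀ ⊗ₖ A) * K) ^ (2 * k + 1)) = ∑ i, lam i ^ (2 * k + 1) := by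
    intro k
    rw [SKCaux.trace_T_odd A B K hK k, htraceC _ (by omega)]
  have heven : ∀ k : ℕ, 0 < k →
      Matrix.trace (((Bᵀ ⊗ₖ A) * K) ^ (2 * k))
        = (∑ i, lam i ^ k) * (∑ i, lam i ^ k) := by
    intro k hk
    rw [SKCaux.trace_T_even A B K hK k, SKCaux.trace_ABt_pow A B k hk, htraceC _ hk]
  have hmuex : ∀ p : Fin n × Fin n, ∃ z : ℂ, z ^ 2 = lam p.1 * lam p.2 :=
    fun p => IsAlgClosed.exists_pow_nat_eq _ (by norm_num : 0 < 2)
  choose mu hmu using hmuex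
  set Pf : Finset (Fin n × Fin n) := Finset.univ.filter (fun p => p.1 < p.2) with hPf
  set S : Multiset ℂ :=
    Finset.univ.val.map lam + (Pf.val.map mu + Pf.val.map (fun p => -mu p)) with hS
  have hcard_univ : Fintype.card (Fin n × Fin n) = n + (Pf.card + Pf.card) := by
    have h := SKCaux.sum_split (n := n) (M := ℕ) (fun _ => 1)
    rw [← hPf] at h
    simpa [Finset.card_univ] using h
  have hcardS : Multiset.card S = Fintype.card (Fin n × Fin n) := by
    rw [hS, Multiset.card_add, Multiset.card_add, Multiset.card_map, Multiset.card_map,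
      Multiset.card_map]
    show Finset.univ.card + (Pf.card + Pf.card) = _
    rw [Finset.card_univ, Fintype.card_fin, hcard_univ]
  have hpsumS : ∀ m : ℕ, 0 < m →
      (S.map (· ^ m)).sum = Matrix.trace (((Bᵀ ⊗ₖ A) * K) ^ m) := by
    intro m hm
    have hsplit : (S.map (· ^ m)).sum
        = (∑ i, lam i ^ m) + ((∑ p ∈ Pf, mu p ^ m) + (∑ p ∈ Pf, (-mu p) ^ m)) := by
      rw [hS]
      simp only [Multiset.map_add, Multiset.sum_add, Multiset.map_map]
      rfl
    rcases Nat.even_or_odd m with he | ho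
    · obtain ⟨k, hk⟩ := he
      have hk0 : 0 < k := by omega
      have hm2 : m = 2 * k := by omega
      rw [hsplit, hm2, heven k hk0]
      have e1 : ∀ i : Fin n, lam i ^ (2 * k) = lam i ^ k * lam i ^ k := by
        intro i
        rw [two_mul, pow_add]
      have e2 : ∀ p : Fin n × Fin n, mu p ^ (2 * k) = lam p.1 ^ k * lam p.2 ^ k := by
        intro p
        rw [pow_mul, hmu p, mul_pow]
      calc (∑ i, lam i ^ (2 * k))
            + ((∑ p ∈ Pf, mu p ^ (2 * k)) + (∑ p ∈ Pf, (-mu p) ^ (2 * k)))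
          = (∑ i, lam i ^ k * lam i ^ k)
            + ((∑ p ∈ Pf, lam p.1 ^ k * lam p.2 ^ k)
              + (∑ p ∈ Pf, lam p.2 ^ k * lam p.1 ^ k)) := by
            congr 1
            · exact Finset.sum_congr rfl (fun i _ => e1 i)
            congr 1
            · exact Finset.sum_congr rfl (fun p _ => e2 p)
            · apply Finset.sum_congr rfl
              intro p _
              rw [Even.neg_pow (even_two_mul k), e2 p, mul_comm]
        _ = ∑ p : Fin n × Fin n, lam p.1 ^ k * lam p.2 ^ k := by
            rw [SKCaux.sum_split (fun p : Fin n × Fin n => lam p.1 ^ k * lam p.2 ^ k), ← hPf]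
        _ = ∑ i, ∑ j, lam i ^ k * lam j ^ k := Fintype.sum_prod_type _
        _ = (∑ i, lam i ^ k) * (∑ i, lam i ^ k) := (Finset.sum_mul_sum _ _ _ _).symm
    · obtain ⟨k, hk⟩ := ho
      rw [hsplit, hk, hodd k]
      have hneg : (∑ p ∈ Pf, (-mu p) ^ (2 * k + 1)) = -∑ p ∈ Pf, mu p ^ (2 * k + 1) := by
        rw [← Finset.sum_neg_distrib]
        apply Finset.sum_congr rfl
        intro p _
        exact Odd.neg_pow ⟨k, rfl⟩ _
      rw [hneg]
      ring
  have hTsplits : (((Bᵀ ⊗ₖ A) * K).charpoly).Splits :=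
    IsAlgClosed.splits _
  have hcardR : Multiset.card ((Bᵀ ⊗ₖ A) * K).charpoly.roots
      = Fintype.card (Fin n × Fin n) := by
    rw [splits_iff_card_roots.mp hTsplits, Matrix.charpoly_natDegree_eq_dim]
  have hpsum_eq : ∀ m, 1 ≤ m → m ≤ Fintype.card (Fin n × Fin n) →
      (((((Bᵀ ⊗ₖ A) * K).charpoly.roots)).map (· ^ m)).sum = (S.map (· ^ m)).sum := by
    intro m h1 _
    rw [← SKCaux.trace_pow ((Bᵀ ⊗ₖ A) * K) m (by omega), hpsumS m (by omega)]
  have hprod := SKCaux.prod_X_sub_C_eq_of_psum_eq hcardR hcardS hpsum_eq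
  have hcharT : ((Bᵀ ⊗ₖ A) * K).charpoly = (S.map fun a => X - C a).prod := by
    conv_lhs => rw [hTsplits.eq_prod_roots_of_monic (Matrix.charpoly_monic _)]
    exact hprod
  ext z
  simp only [Set.mem_union, Set.mem_range, Set.mem_setOf_eq]
  rw [SKCaux.mem_spectrum_iff_eval, hcharT, eval_multiset_prod, Multiset.map_map]
  simp only [Function.comp_apply, eval_sub, eval_X, eval_C]
  rw [Multiset.prod_eq_zero_iff]
  constructor
  · intro h0
    obtain ⟨a, haS, ha0⟩ := Multiset.mem_map.mp h0
    have haz : a = z := (sub_eq_zero.mp ha0).symm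
    subst haz
    rw [hS] at haS
    rcases Multiset.mem_add.mp haS with h1 | h23
    · obtain ⟨i, _, hi⟩ := Multiset.mem_map.mp h1
      exact Or.inl ⟨i, hi⟩
    rcases Multiset.mem_add.mp h23 with h2 | h3
    · obtain ⟨p, hp, hpe⟩ := Multiset.mem_map.mp h2
      have hplt : p.1 < p.2 := by
        have hp' := Finset.mem_val.mp hp
        rw [hPf] at hp'
        exact (Finset.mem_filter.mp hp').2
      refine Or.inr ⟨p.1, p.2, hplt, ?_⟩
      rw [← hpe, hmu p]
    · obtain ⟨p, hp, hpe⟩ := Multiset.mem_map.mp h3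
      have hplt : p.1 < p.2 := by
        have hp' := Finset.mem_val.mp hp
        rw [hPf] at hp'
        exact (Finset.mem_filter.mp hp').2
      refine Or.inr ⟨p.1, p.2, hplt, ?_⟩
      rw [← hpe, Even.neg_pow even_two, hmu p]
  · intro h0
    apply Multiset.mem_map.mpr
    rcases h0 with ⟨i, hi⟩ | ⟨i, j, hij, hzz⟩
    · refine ⟨lam i, ?_, by rw [hi, sub_self]⟩
      rw [hS]
      apply Multiset.mem_add.mpr
      exact Or.inl (Multiset.mem_map.mpr ⟨i, Finset.mem_val.mpr (Finset.mem_univ i), rfl⟩)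
    · have hp : (i, j) ∈ Pf := by
        rw [hPf]
        exact Finset.mem_filter.mpr ⟨Finset.mem_univ _, hij⟩
      have h2 : z ^ 2 = mu (i, j) ^ 2 := by
        rw [hzz, hmu (i, j)]
      have hfac : (z - mu (i, j)) * (z + mu (i, j)) = 0 := by
        have : z ^ 2 - mu (i, j) ^ 2 = 0 := by rw [h2, sub_self]
        calc (z - mu (i, j)) * (z + mu (i, j)) = z ^ 2 - mu (i, j) ^ 2 := by ring
          _ = 0 := this
      rcases mul_eq_zero.mp hfac with hz1 | hz2
      · refine ⟨mu (i, j), ?_, hz1⟩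
        rw [hS]
        apply Multiset.mem_add.mpr
        refine Or.inr (Multiset.mem_add.mpr (Or.inl ?_))
        exact Multiset.mem_map.mpr ⟨(i, j), Finset.mem_val.mpr hp, rfl⟩
      · refine ⟨-mu (i, j), ?_, by rw [sub_neg_eq_add]; exact hz2⟩
        rw [hS]
        apply Multiset.mem_add.mpr
        refine Or.inr (Multiset.mem_add.mpr (Or.inr ?_))
        exact Multiset.mem_map.mpr ⟨(i, j), Finset.mem_val.mpr hp, rfl⟩
end

section
/- Let A, B ∈ ℂ^{n×n}, let 𝒫 be the n²×n² commutation matrix, and let λ₁, …, λₙ be the eigenvalues of AᵀB (with algebraic multiplicity). Then the set of eigenvalues of the square of the matrix (Bᵀ ⊗ A) 𝒫 is { λᵢ λⱼ : 1 ≤ i, j ≤ n }. -/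
open Matrix Kronecker Polynomial

namespace SpecAux
variable {n : ℕ}

lemma vec_eq_zero_iff (X : Matrix (Fin n) (Fin n) ℂ) : _root_.vec X = 0 ↔ X = 0 := by
  constructor
  · intro h; ext i j; exact congrFun h (j, i)
  · rintro rfl; rfl

lemma vec_smul (c : ℂ) (X : Matrix (Fin n) (Fin n) ℂ) : _root_.vec (c • X) = c • _root_.vec X := rfl

lemma kron_mulVec (C D X : Matrix (Fin n) (Fin n) ℂ) :
    (C ⊗ₖ D) *ᵥ _root_.vec X = _root_.vec (D * X * Cᵀ) := by
  funext p
  obtain ⟨j, i⟩ := p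
  simp only [Matrix.mulVec, dotProduct, _root_.vec, Matrix.mul_apply, kroneckerMap_apply,
    Fintype.sum_prod_type, Matrix.transpose_apply, Finset.sum_mul]
  apply Finset.sum_congr rfl; intro l _
  apply Finset.sum_congr rfl; intro k _
  ring




lemma ext_of_mulVec {M N : Matrix (Fin n × Fin n) (Fin n × Fin n) ℂ}
    (h : ∀ X : Matrix (Fin n) (Fin n) ℂ, M *ᵥ (fun p => X p.2 p.1) = N *ᵥ (fun p => X p.2 p.1)) :
    M = N := by
  ext i j
  have := congrFun (h (Matrix.of fun a b => if (b, a) = j then 1 else 0)) i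
  simp only [Matrix.mulVec, dotProduct, Matrix.of_apply] at this
  simpa [Prod.ext_iff, mul_ite, Finset.sum_ite_eq', ← Prod.ext_iff] using this

lemma charpoly_transpose (M : Matrix (Fin n) (Fin n) ℂ) : Mᵀ.charpoly = M.charpoly := by
  unfold Matrix.charpoly
  rw [← Matrix.det_transpose (charmatrix Mᵀ)]
  congr 1
  ext i j
  by_cases h : i = j
  · subst h; simp [Matrix.charmatrix_apply, Matrix.transpose_apply]
  · simp [Matrix.charmatrix_apply, Matrix.transpose_apply, Matrix.diagonal_apply, h, Ne.symm h]

lemma eval_charpoly' (M : Matrix (Fin n) (Fin n) ℂ) (c : ℂ) :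
    M.charpoly.eval c = (c • (1 : Matrix (Fin n) (Fin n) ℂ) - M).det := by
  rw [Matrix.charpoly, ← Polynomial.coe_evalRingHom, RingHom.map_det]
  congr 1
  ext i j
  by_cases h : i = j
  · subst h; simp [Matrix.charmatrix_apply]
  · simp [Matrix.charmatrix_apply, Matrix.diagonal_apply, h, Matrix.one_apply]




lemma det_scalar_sub_mul (P Q : Matrix (Fin n) (Fin n) ℂ[X]) :
    (Matrix.scalar (Fin n) X - P * Q).det = (Matrix.scalar (Fin n) X - Q * P).det := by
  set s : Matrix (Fin n) (Fin n) ℂ[X] := Matrix.scalar (Fin n) X with hs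
  have hcomm : ∀ R : Matrix (Fin n) (Fin n) ℂ[X], R * s = s * R := by
    intro R
    exact (Matrix.scalar_commute X (fun r => Commute.all X r) R).symm
  have hdets : s.det = X ^ n := by
    simp [hs, Matrix.scalar, Matrix.det_diagonal]
  set U : Matrix (Fin n ⊕ Fin n) (Fin n ⊕ Fin n) ℂ[X] := Matrix.fromBlocks s P Q 1 with hU
  set L : Matrix (Fin n ⊕ Fin n) (Fin n ⊕ Fin n) ℂ[X] := Matrix.fromBlocks 1 0 (-Q) s with hL
  have hdetL : L.det = X ^ n := by
    rw [hL, Matrix.det_fromBlocks_zero₁₂]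
    simp [hdets]
  have h1 : L * U = Matrix.fromBlocks s P 0 (s - Q * P) := by
    rw [hL, hU, Matrix.fromBlocks_multiply]
    simp [hcomm, sub_mul, neg_mul, neg_add_eq_sub]
  have h2 : U * L = Matrix.fromBlocks (s - P * Q) (P * s) 0 s := by
    rw [hL, hU, Matrix.fromBlocks_multiply]
    simp [mul_sub, sub_mul, sub_eq_add_neg]
  have e1 : X ^ n * U.det = X ^ n * (s - Q * P).det := by
    calc X ^ n * U.det = (L * U).det := by rw [Matrix.det_mul, hdetL]
    _ = s.det * (s - Q * P).det := by rw [h1, Matrix.det_fromBlocks_zero₂₁]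
    _ = X ^ n * (s - Q * P).det := by rw [hdets]
  have e2 : X ^ n * U.det = X ^ n * (s - P * Q).det := by
    calc X ^ n * U.det = (U * L).det := by rw [Matrix.det_mul, hdetL, mul_comm]
    _ = (s - P * Q).det * s.det := by rw [h2, Matrix.det_fromBlocks_zero₂₁]
    _ = X ^ n * (s - P * Q).det := by rw [hdets, mul_comm]
  have hX : (X : ℂ[X]) ^ n ≠ 0 := pow_ne_zero _ Polynomial.X_ne_zero
  exact mul_left_cancel₀ hX (e2.symm.trans e1)

lemma charpoly_mul_comm (M N : Matrix (Fin n) (Fin n) ℂ) :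
    (M * N).charpoly = (N * M).charpoly := by
  unfold Matrix.charpoly Matrix.charmatrix
  rw [_root_.map_mul (Polynomial.C.mapMatrix (m := Fin n)) M N,
    _root_.map_mul (Polynomial.C.mapMatrix (m := Fin n)) N M]
  exact det_scalar_sub_mul _ _




lemma key (Xm Ym Z : Matrix (Fin n) (Fin n) ℂ) (μ : ℂ) (hZ : Ym * Z * Xmᵀ = μ • Z) :
    ∀ l : List ℂ,
      (l.map fun c => μ • (1 : Matrix (Fin n) (Fin n) ℂ) - c • Ym).prod * Z
        = Ym ^ l.length * (Z * (l.map fun c => Xmᵀ - c • (1 : Matrix (Fin n) (Fin n) ℂ)).prod)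
  | [] => by simp
  | c :: l => by
    have IH := key Xm Ym Z μ hZ l
    set q := (l.map fun c => Xmᵀ - c • (1 : Matrix (Fin n) (Fin n) ℂ)).prod with hq
    set k := l.length
    simp only [List.map_cons, List.prod_cons, List.length_cons]
    rw [mul_assoc, IH, pow_succ']
    have hmain : μ • (Ym ^ k * (Z * q)) = Ym * Ym ^ k * (Z * (Xmᵀ * q)) := by
      have : μ • (Ym ^ k * (Z * q)) = Ym ^ k * ((μ • Z) * q) := by
        rw [smul_mul_assoc, mul_smul_comm]
      rw [this, ← hZ]
      have hc : Ym ^ k * Ym = Ym * Ym ^ k := (Commute.pow_self Ym k).symm ▸ rfl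
      calc Ym ^ k * (Ym * Z * Xmᵀ * q) = Ym ^ k * Ym * (Z * (Xmᵀ * q)) := by
            noncomm_ring
      _ = Ym * Ym ^ k * (Z * (Xmᵀ * q)) := by rw [(Commute.self_pow Ym k).symm.eq]
    calc (μ • 1 - c • Ym) * (Ym ^ k * (Z * q))
        = μ • (Ym ^ k * (Z * q)) - c • (Ym * (Ym ^ k * (Z * q))) := by
          rw [sub_mul, smul_mul_assoc, one_mul, smul_mul_assoc]
    _ = Ym * Ym ^ k * (Z * (Xmᵀ * q)) - c • (Ym * Ym ^ k * (Z * q)) := by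
          rw [hmain, mul_assoc Ym (Ym ^ k) (Z * q)]
    _ = Ym * Ym ^ k * (Z * ((Xmᵀ - c • 1) * q)) := by
          rw [sub_mul, smul_mul_assoc, one_mul, mul_sub, mul_sub, mul_smul_comm, mul_smul_comm]

end SpecAux
namespace SpecAux
variable {n : ℕ}

lemma vec_injective : Function.Injective (_root_.vec (m := n) (n := n)) := by
  intro X Y h
  ext i j
  exact congrFun h (j, i)

lemma mul_vecMulVec (M : Matrix (Fin n) (Fin n) ℂ) (v u : Fin n → ℂ) :
    M * Matrix.vecMulVec v u = Matrix.vecMulVec (M *ᵥ v) u := by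
  ext k l
  simp [Matrix.vecMulVec_apply, Matrix.mul_apply, Matrix.mulVec, dotProduct,
    Finset.sum_mul, mul_assoc]

lemma vecMulVec_mul (N : Matrix (Fin n) (Fin n) ℂ) (v u : Fin n → ℂ) :
    Matrix.vecMulVec v u * N = Matrix.vecMulVec v (Nᵀ *ᵥ u) := by
  ext k l
  simp only [Matrix.vecMulVec_apply, Matrix.mul_apply, Matrix.mulVec, dotProduct,
    Finset.mul_sum, Matrix.transpose_apply]
  apply Finset.sum_congr rfl
  intros; ring

lemma vecMulVec_smul_smul (a b : ℂ) (v u : Fin n → ℂ) :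
    Matrix.vecMulVec (a • v) (b • u) = (a * b) • Matrix.vecMulVec v u := by
  ext k l
  simp [Matrix.vecMulVec_apply]
  ring

end SpecAux
/-- If `λ₁, …, λₙ` are the eigenvalues of `AᵀB` (with algebraic multiplicity)
and `K` is the commutation matrix (`K vec X = vec Xᵀ` for all `X`), then the
spectrum of `((Bᵀ ⊗ A) K)²` is `{λᵢ λⱼ : 1 ≤ i, j ≤ n}`. -/
theorem spectrum_kronecker_comm_sq (n : ℕ) (A B : Matrix (Fin n) (Fin n) ℂ)
    (K : Matrix (Fin n × Fin n) (Fin n × Fin n) ℂ)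
    (hK : ∀ X : Matrix (Fin n) (Fin n) ℂ, K *ᵥ _root_.vec X = _root_.vec Xᵀ)
    (lam : Fin n → ℂ)
    (hlam : (Aᵀ * B).charpoly = ∏ i, (Polynomial.X - Polynomial.C (lam i))) :
    spectrum ℂ (((Bᵀ ⊗ₖ A) * K) ^ 2) =
      {mu : ℂ | ∃ i j : Fin n, mu = lam i * lam j} := by
  classical
  set Xm := Bᵀ * A with hXm
  set Ym := A * Bᵀ with hYm
  set p : Polynomial ℂ := ∏ i, (Polynomial.X - Polynomial.C (lam i)) with hp
  have hXmT : Xmᵀ = Aᵀ * B := by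
    rw [hXm, Matrix.transpose_mul, Matrix.transpose_transpose]
  have hcXmT : (Xmᵀ).charpoly = p := by rw [hXmT]; exact hlam
  have hcXm : Xm.charpoly = p := by
    rw [← SpecAux.charpoly_transpose, hcXmT]
  have hcYm : Ym.charpoly = p := by
    rw [hYm, SpecAux.charpoly_mul_comm A Bᵀ, ← hXm, hcXm]
  -- root characterization
  have hroot : ∀ (M : Matrix (Fin n) (Fin n) ℂ), M.charpoly = p → ∀ c : ℂ,
      ((c • (1 : Matrix (Fin n) (Fin n) ℂ) - M).det = 0 ↔ ∃ k, c = lam k) := by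
    intro M hM c
    rw [← SpecAux.eval_charpoly', hM, hp, Polynomial.eval_prod]
    simp only [Polynomial.eval_sub, Polynomial.eval_X, Polynomial.eval_C]
    rw [Finset.prod_eq_zero_iff]
    constructor
    · rintro ⟨k, -, hk⟩
      exact ⟨k, by rwa [sub_eq_zero] at hk⟩
    · rintro ⟨k, rfl⟩
      exact ⟨k, Finset.mem_univ _, sub_self _⟩
  -- the square is a Kronecker product
  have hsq : ((Bᵀ ⊗ₖ A) * K) ^ 2 = Xm ⊗ₖ Ym := by
    rw [pow_two]
    apply SpecAux.ext_of_mulVec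
    intro X
    have h1 : ∀ Y : Matrix (Fin n) (Fin n) ℂ,
        ((Bᵀ ⊗ₖ A) * K) *ᵥ _root_.vec Y = _root_.vec (A * Yᵀ * B) := by
      intro Y
      rw [← Matrix.mulVec_mulVec, hK, SpecAux.kron_mulVec, Matrix.transpose_transpose]
    show ((Bᵀ ⊗ₖ A) * K * ((Bᵀ ⊗ₖ A) * K)) *ᵥ _root_.vec X = (Xm ⊗ₖ Ym) *ᵥ _root_.vec X
    rw [← Matrix.mulVec_mulVec, h1, h1, SpecAux.kron_mulVec]
    rw [hXm, hYm, hXmT]  -- hXmT : Xmᵀ = Aᵀ * B ... but goal has (Bᵀ*A)ᵀ; fix below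
    simp [Matrix.transpose_mul, Matrix.transpose_transpose, Matrix.mul_assoc]
  rw [hsq]
  ext μ
  simp only [Set.mem_setOf_eq]
  rw [spectrum.mem_iff, Algebra.algebraMap_eq_smul_one, Matrix.isUnit_iff_isUnit_det,
    isUnit_iff_ne_zero, not_not]
  constructor
  · -- hard direction
    intro h0
    obtain ⟨w, hw0, hww⟩ := Matrix.exists_mulVec_eq_zero_iff.mpr h0
    set Z : Matrix (Fin n) (Fin n) ℂ := Matrix.of fun i j => w (j, i) with hZdef
    have hvecZ : _root_.vec Z = w := rfl
    have hZ0 : Z ≠ 0 := by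
      intro h
      apply hw0
      rw [← hvecZ, h]
      rfl
    have heig : Ym * Z * Xmᵀ = μ • Z := by
      apply SpecAux.vec_injective
      rw [← SpecAux.kron_mulVec, hvecZ, SpecAux.vec_smul, hvecZ]
      rw [Matrix.sub_mulVec, sub_eq_zero, Matrix.smul_mulVec, Matrix.one_mulVec] at hww
      exact hww.symm
    -- apply the key lemma
    have hq0 : ((List.finRange n).map (fun i => Xmᵀ - lam i • (1 : Matrix (Fin n) (Fin n) ℂ))).prod = 0 := by
      have hp' : p = ((List.finRange n).map
          (fun i => (Polynomial.X : Polynomial ℂ) - Polynomial.C (lam i))).prod := by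
        rw [hp, Fin.prod_univ_def]
      have haev : Polynomial.aeval Xmᵀ p = 0 := by
        rw [← hcXmT]; exact Matrix.aeval_self_charpoly _
      rw [hp', map_list_prod (Polynomial.aeval Xmᵀ)] at haev
      rw [List.map_map] at haev
      have hfe : (⇑(Polynomial.aeval Xmᵀ) ∘ fun i => (Polynomial.X : Polynomial ℂ) - Polynomial.C (lam i))
          = fun i => Xmᵀ - lam i • (1 : Matrix (Fin n) (Fin n) ℂ) := by
        funext i
        simp [Algebra.algebraMap_eq_smul_one]
      rw [hfe] at haev
      exact haev
    have hkey := SpecAux.key Xm Ym Z μ heig ((List.finRange n).map lam)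
    rw [List.map_map, List.map_map] at hkey
    have hPZ : (((List.finRange n).map
        (fun i => μ • (1 : Matrix (Fin n) (Fin n) ℂ) - lam i • Ym)).prod) * Z = 0 := by
      have : ((fun c => μ • (1 : Matrix (Fin n) (Fin n) ℂ) - c • Ym) ∘ lam)
          = fun i => μ • (1 : Matrix (Fin n) (Fin n) ℂ) - lam i • Ym := rfl
      rw [← this]
      rw [hkey]
      have : ((fun c => Xmᵀ - c • (1 : Matrix (Fin n) (Fin n) ℂ)) ∘ lam)
          = fun i => Xmᵀ - lam i • (1 : Matrix (Fin n) (Fin n) ℂ) := rfl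
      rw [this, hq0, mul_zero, mul_zero]
    -- get a nonzero kernel vector of the product
    obtain ⟨i0, j0, hij⟩ : ∃ i j, Z i j ≠ 0 := by
      by_contra hc
      push_neg at hc
      exact hZ0 (by ext i j; simpa using hc i j)
    set P := ((List.finRange n).map
        (fun i => μ • (1 : Matrix (Fin n) (Fin n) ℂ) - lam i • Ym)).prod with hPdef
    have hdetP : P.det = 0 := by
      rw [← Matrix.exists_mulVec_eq_zero_iff]
      refine ⟨fun k => Z k j0, ?_, ?_⟩
      · intro h
        exact hij (congrFun h i0)
      · funext i
        have : (P *ᵥ fun k => Z k j0) i = (P * Z) i j0 := by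
          simp [Matrix.mulVec, dotProduct, Matrix.mul_apply]
        rw [this, hPZ]
        rfl
    -- determinant of the list product
    have hdetlist : P.det = (((List.finRange n).map
        (fun i => (μ • (1 : Matrix (Fin n) (Fin n) ℂ) - lam i • Ym).det))).prod := by
      have h := map_list_prod (Matrix.detMonoidHom)
        ((List.finRange n).map (fun i => μ • (1 : Matrix (Fin n) (Fin n) ℂ) - lam i • Ym))
      rw [List.map_map] at h
      simpa [Matrix.coe_detMonoidHom, Function.comp_def, hPdef] using h
    rw [hdetlist] at hdetP
    have hmem := List.prod_eq_zero_iff.mp hdetP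
    obtain ⟨i, -, hdet0⟩ := List.mem_map.mp hmem
    by_cases hli : lam i = 0
    · have hdm : (μ • (1 : Matrix (Fin n) (Fin n) ℂ)).det = 0 := by
        simpa [hli] using hdet0
      rw [Matrix.det_smul, Matrix.det_one, mul_one] at hdm
      have hn : n ≠ 0 := fun h => (h ▸ i).elim0
      have hμ : μ = 0 := by
        rw [Fintype.card_fin] at hdm
        exact pow_eq_zero_iff hn |>.mp hdm
      exact ⟨i, i, by rw [hμ, hli, zero_mul]⟩
    · have hfac : μ • (1 : Matrix (Fin n) (Fin n) ℂ) - lam i • Ym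
          = lam i • ((μ / lam i) • (1 : Matrix (Fin n) (Fin n) ℂ) - Ym) := by
        rw [smul_sub, smul_smul]
        congr 2
        field_simp
      rw [hfac, Matrix.det_smul] at hdet0
      have h2 : ((μ / lam i) • (1 : Matrix (Fin n) (Fin n) ℂ) - Ym).det = 0 := by
        rcases mul_eq_zero.mp hdet0 with h | h
        · exact absurd h (pow_ne_zero _ hli)
        · exact h
      obtain ⟨j, hj⟩ := (hroot Ym hcYm _).mp h2
      refine ⟨i, j, ?_⟩
      have : μ = lam i * (μ / lam i) := by field_simp
      rw [this, hj]
  · -- easy direction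
    rintro ⟨i, j, rfl⟩
    -- eigenvector of Xm
    obtain ⟨u, hu0, huu⟩ := Matrix.exists_mulVec_eq_zero_iff.mpr
      ((hroot Xm hcXm (lam i)).mpr ⟨i, rfl⟩)
    obtain ⟨v, hv0, hvv⟩ := Matrix.exists_mulVec_eq_zero_iff.mpr
      ((hroot Ym hcYm (lam j)).mpr ⟨j, rfl⟩)
    have hXu : Xm *ᵥ u = lam i • u := by
      rw [Matrix.sub_mulVec, sub_eq_zero, Matrix.smul_mulVec, Matrix.one_mulVec] at huu
      exact huu.symm
    have hYv : Ym *ᵥ v = lam j • v := by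
      rw [Matrix.sub_mulVec, sub_eq_zero, Matrix.smul_mulVec, Matrix.one_mulVec] at hvv
      exact hvv.symm
    set Z := Matrix.vecMulVec v u with hZdef
    have hZeig : Ym * Z * Xmᵀ = (lam i * lam j) • Z := by
      rw [hZdef, SpecAux.mul_vecMulVec, SpecAux.vecMulVec_mul, Matrix.transpose_transpose,
        hXu, hYv, SpecAux.vecMulVec_smul_smul, mul_comm (lam j) (lam i)]
    have hvZ0 : _root_.vec Z ≠ 0 := by
      obtain ⟨l, hl⟩ := Function.ne_iff.mp hu0
      obtain ⟨k, hk⟩ := Function.ne_iff.mp hv0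
      intro h
      have := congrFun h (l, k)
      simp only [_root_.vec, Pi.zero_apply] at this
      rw [hZdef] at this
      exact (mul_ne_zero hk hl) (by simpa [Matrix.vecMulVec_apply] using this)
    rw [← Matrix.exists_mulVec_eq_zero_iff]
    refine ⟨_root_.vec Z, hvZ0, ?_⟩
    rw [Matrix.sub_mulVec, Matrix.smul_mulVec, Matrix.one_mulVec, sub_eq_zero,
      SpecAux.kron_mulVec, hZeig, SpecAux.vec_smul]
end

section
/- Let A, B, C ∈ ℂ^{m×n}. If X ∈ ℂ^{m×n} satisfies the ⊤-Stein equation X = A Xᵀ B + C, then X also satisfies the (ordinary) Stein equation X = (ABᵀ) X (AᵀB) + C + A Cᵀ B. -/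
open Matrix

/-- **Equation (5).** If `X` solves the ⊤-Stein equation `X = A Xᵀ B + C`,
then `X` also solves the ordinary Stein equation
`X = (ABᵀ) X (AᵀB) + C + A Cᵀ B`. -/
theorem tStein_implies_stein (m n : ℕ) (A B C X : Matrix (Fin m) (Fin n) ℂ)
    (hX : X = A * Xᵀ * B + C) :
    X = (A * Bᵀ) * X * (Aᵀ * B) + C + A * Cᵀ * B := by
  have h : Xᵀ = Bᵀ * X * Aᵀ + Cᵀ := by
    conv_lhs => rw [hX]
    simp [transpose_add, transpose_mul, Matrix.mul_assoc]
  calc X = A * Xᵀ * B + C := hX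
    _ = A * (Bᵀ * X * Aᵀ + Cᵀ) * B + C := by rw [h]
    _ = (A * Bᵀ) * X * (Aᵀ * B) + C + A * Cᵀ * B := by simp [Matrix.add_mul, Matrix.mul_add, Matrix.mul_assoc]; abel
end

section
/- Let A, B, C, X ∈ ℂ^{n×n} and let a, b ∈ ℂ be scalars such that the matrix aA + bBᵀ is invertible. If X satisfies the ⊤-Sylvester equation A X + Xᵀ B = C, then X satisfies X + U Xᵀ V = W, where U = (aA + bBᵀ)⁻¹, V = aB + bAᵀ, and W = (aA + bBᵀ)⁻¹ (aC + bCᵀ). -/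
open Matrix

/-- **Reduction of the ⊤-Sylvester equation to a ⊤-Stein equation.**
If `aA + bBᵀ` is invertible and `X` solves `AX + XᵀB = C`, then
`X + U Xᵀ V = W` with `U = (aA + bBᵀ)⁻¹`, `V = aB + bAᵀ`,
`W = (aA + bBᵀ)⁻¹ (aC + bCᵀ)`. -/
theorem tSylvester_to_tStein (n : ℕ) (A B C X : Matrix (Fin n) (Fin n) ℂ) (a b : ℂ)
    (hinv : IsUnit (a • A + b • Bᵀ))
    (hX : A * X + Xᵀ * B = C) :
    X + (a • A + b • Bᵀ)⁻¹ * Xᵀ * (a • B + b • Aᵀ) =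
      (a • A + b • Bᵀ)⁻¹ * (a • C + b • Cᵀ) := by
  have hdet : IsUnit (a • A + b • Bᵀ).det := (isUnit_iff_isUnit_det _).mp hinv
  have hinvmul : (a • A + b • Bᵀ)⁻¹ * (a • A + b • Bᵀ) = 1 := nonsing_inv_mul _ hdet
  have key : (a • A + b • Bᵀ) * X + Xᵀ * (a • B + b • Aᵀ) = a • C + b • Cᵀ := by
    rw [← hX]
    simp only [Matrix.transpose_add, Matrix.transpose_mul, Matrix.add_mul, Matrix.mul_add,
      Matrix.smul_mul, Matrix.mul_smul, smul_add, transpose_transpose]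
    abel
  calc X + (a • A + b • Bᵀ)⁻¹ * Xᵀ * (a • B + b • Aᵀ)
      = (a • A + b • Bᵀ)⁻¹ * ((a • A + b • Bᵀ) * X + Xᵀ * (a • B + b • Aᵀ)) := by
        simp only [Matrix.mul_add, ← Matrix.mul_assoc, hinvmul, Matrix.one_mul]
    _ = (a • A + b • Bᵀ)⁻¹ * (a • C + b • Cᵀ) := by rw [key]
end

section
/- Let A, B, C ∈ ℂ^{m×n} with ρ(AᵀB) < 1, where ρ denotes the spectral radius. Then the series X = Σ_{i=0}^{∞} (ABᵀ)ⁱ (A Cᵀ B + C) (AᵀB)ⁱ converges, and its sum X is the unique solution of the ⊤-Stein equation X = A Xᵀ B + C. -/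
open Matrix

section TSteinAux
open Filter

attribute [local instance] Matrix.frobeniusNormedAddCommGroup Matrix.frobeniusNormedSpace
  Matrix.frobeniusNormedRing Matrix.frobeniusNormedAlgebra

private lemma tStein_aux_pow_bound {n : ℕ} (M : Matrix (Fin n) (Fin n) ℂ)
    (h : spectralRadius ℂ M < 1) :
    ∃ r : ℝ, 0 ≤ r ∧ r < 1 ∧ ∀ᶠ k in atTop, ‖M ^ k‖ ≤ r ^ k := by
  obtain ⟨c, hc1, hc2⟩ := exists_between h
  have hgel := spectrum.pow_nnnorm_pow_one_div_tendsto_nhds_spectralRadius M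
  have hev : ∀ᶠ k : ℕ in atTop, (‖M ^ k‖₊ : ENNReal) ^ (1 / (k:ℝ)) < c :=
    hgel.eventually_lt_const hc1
  have hc2' : c ≠ ⊤ := (hc2.trans_le le_top).ne
  refine ⟨c.toReal, ENNReal.toReal_nonneg, ?_, ?_⟩
  · exact (ENNReal.toReal_lt_toReal hc2' ENNReal.one_ne_top).2 hc2 |>.trans_eq ENNReal.toReal_one
  · filter_upwards [hev, eventually_ge_atTop 1] with k hk hk1
    have hkne : (k:ℝ) ≠ 0 := by positivity
    have h1 : ((‖M ^ k‖₊ : ENNReal) ^ (1 / (k:ℝ))) ^ (k:ℝ) ≤ c ^ (k:ℝ) := by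
      gcongr
    rw [← ENNReal.rpow_mul, one_div, inv_mul_cancel₀ hkne, ENNReal.rpow_one,
      ENNReal.rpow_natCast] at h1
    have h2 := ENNReal.toReal_mono (by exact ENNReal.pow_ne_top hc2') h1
    rw [ENNReal.toReal_pow] at h2
    simpa [coe_nnnorm] using h2

private lemma tStein_mul_pow_comm {a b : ℕ} (X : Matrix (Fin a) (Fin b) ℂ)
    (Y : Matrix (Fin b) (Fin a) ℂ) (i : ℕ) :
    X * (Y * X) ^ i = (X * Y) ^ i * X := by
  induction i with
  | zero => simp
  | succ i ih =>
    rw [pow_succ, pow_succ, ← Matrix.mul_assoc, ih]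
    simp [Matrix.mul_assoc]

private lemma tStein_pow_succ {m n : ℕ} (A B : Matrix (Fin m) (Fin n) ℂ)
    (M : Matrix (Fin m) (Fin n) ℂ) (i : ℕ) :
    (A * Bᵀ) ^ (i + 1) * M * (Aᵀ * B) ^ (i + 1)
      = (A * Bᵀ) ^ i * (A * Bᵀ * M * (Aᵀ * B)) * (Aᵀ * B) ^ i := by
  rw [pow_succ, pow_succ']
  simp [Matrix.mul_assoc]

private lemma tStein_conj {m n : ℕ} (A B : Matrix (Fin m) (Fin n) ℂ)
    (M : Matrix (Fin m) (Fin n) ℂ) (i : ℕ) :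
    A * ((A * Bᵀ) ^ i * M * (Aᵀ * B) ^ i)ᵀ * B
      = (A * Bᵀ) ^ i * (A * Mᵀ * B) * (Aᵀ * B) ^ i := by
  induction i generalizing M with
  | zero => simp
  | succ i ih =>
    rw [tStein_pow_succ, ih]
    rw [show A * (A * Bᵀ * M * (Aᵀ * B))ᵀ * B = A * Bᵀ * (A * Mᵀ * B) * (Aᵀ * B) by
      simp [Matrix.transpose_mul, Matrix.mul_assoc]]
    rw [tStein_pow_succ]

private lemma tStein_summable {m n : ℕ} (A B : Matrix (Fin m) (Fin n) ℂ)
    (M : Matrix (Fin m) (Fin n) ℂ)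
    (hρ : spectralRadius ℂ (Aᵀ * B) < 1) :
    Summable (fun i : ℕ => (A * Bᵀ) ^ i * M * (Aᵀ * B) ^ i) := by
  obtain ⟨r, hr0, hr1, hev⟩ := tStein_aux_pow_bound (Aᵀ * B) hρ
  obtain ⟨N, hN⟩ := eventually_atTop.1 hev
  rw [← summable_nat_add_iff (N + 1)]
  apply Summable.of_norm
  have key : ∀ i : ℕ, ‖(A * Bᵀ) ^ (i + N + 1) * M * (Aᵀ * B) ^ (i + N + 1)‖ ≤
      (‖A‖ * ‖Bᵀ * M‖) * r ^ i := by
    intro i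
    have hshift : (A * Bᵀ) ^ (i + N + 1) = A * (Bᵀ * A) ^ (i + N) * Bᵀ := by
      rw [pow_succ, ← Matrix.mul_assoc, ← tStein_mul_pow_comm A Bᵀ]
    have hBA : ‖(Bᵀ * A) ^ (i + N)‖ = ‖(Aᵀ * B) ^ (i + N)‖ := by
      rw [show Bᵀ * A = (Aᵀ * B)ᵀ by simp [Matrix.transpose_mul], ← Matrix.transpose_pow,
        Matrix.frobenius_norm_transpose]
    have hre : (A * Bᵀ) ^ (i + N + 1) * M * (Aᵀ * B) ^ (i + N + 1)
        = A * ((Bᵀ * A) ^ (i + N) * (Bᵀ * M * (Aᵀ * B) ^ (i + N + 1))) := by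
      rw [hshift]; simp only [Matrix.mul_assoc]
    have nQ : ‖Bᵀ * M * (Aᵀ * B) ^ (i + N + 1)‖ ≤ ‖Bᵀ * M‖ * ‖(Aᵀ * B) ^ (i + N + 1)‖ :=
      Matrix.frobenius_norm_mul _ _
    have nZ : ‖(Bᵀ * A) ^ (i + N) * (Bᵀ * M * (Aᵀ * B) ^ (i + N + 1))‖ ≤
        ‖(Aᵀ * B) ^ (i + N)‖ * (‖Bᵀ * M‖ * ‖(Aᵀ * B) ^ (i + N + 1)‖) := by
      rw [← hBA]
      exact (Matrix.frobenius_norm_mul _ _).trans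
        (mul_le_mul_of_nonneg_left nQ (norm_nonneg _))
    have nA : ‖(A * Bᵀ) ^ (i + N + 1) * M * (Aᵀ * B) ^ (i + N + 1)‖ ≤
        ‖A‖ * (‖(Aᵀ * B) ^ (i + N)‖ * (‖Bᵀ * M‖ * ‖(Aᵀ * B) ^ (i + N + 1)‖)) := by
      rw [hre]
      exact (Matrix.frobenius_norm_mul _ _).trans
        (mul_le_mul_of_nonneg_left nZ (norm_nonneg _))
    have b1 : ‖(Aᵀ * B) ^ (i + N)‖ ≤ r ^ i :=
      (hN _ (by omega)).trans (pow_le_pow_of_le_one hr0 hr1.le (by omega))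
    have b2 : ‖(Aᵀ * B) ^ (i + N + 1)‖ ≤ 1 :=
      (hN _ (by omega)).trans (pow_le_one₀ hr0 hr1.le)
    have b3 : ‖(Aᵀ * B) ^ (i + N)‖ * (‖Bᵀ * M‖ * ‖(Aᵀ * B) ^ (i + N + 1)‖) ≤
        r ^ i * (‖Bᵀ * M‖ * 1) := by
      have hc : (0:ℝ) ≤ ‖Bᵀ * M‖ * ‖(Aᵀ * B) ^ (i + N + 1)‖ :=
        mul_nonneg (norm_nonneg _) (norm_nonneg _)
      exact mul_le_mul b1 (mul_le_mul_of_nonneg_left b2 (norm_nonneg _)) hc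
        (pow_nonneg hr0 i)
    have := nA.trans (mul_le_mul_of_nonneg_left b3 (norm_nonneg _))
    calc ‖(A * Bᵀ) ^ (i + N + 1) * M * (Aᵀ * B) ^ (i + N + 1)‖
        ≤ ‖A‖ * (r ^ i * (‖Bᵀ * M‖ * 1)) := this
      _ = (‖A‖ * ‖Bᵀ * M‖) * r ^ i := by ring
  refine Summable.of_nonneg_of_le (fun i => norm_nonneg _) key ?_
  exact (summable_geometric_of_lt_one hr0 hr1).mul_left _

private lemma tStein_main {m n : ℕ} (A B C : Matrix (Fin m) (Fin n) ℂ)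
    (hρ : spectralRadius ℂ (Aᵀ * B) < 1) :
    ∃ X : Matrix (Fin m) (Fin n) ℂ,
      HasSum (fun i : ℕ => (A * Bᵀ) ^ i * (A * Cᵀ * B + C) * (Aᵀ * B) ^ i) X ∧
      X = A * Xᵀ * B + C ∧
      ∀ Y : Matrix (Fin m) (Fin n) ℂ, Y = A * Yᵀ * B + C → Y = X := by
  classical
  set g : ℕ → Matrix (Fin m) (Fin n) ℂ := fun i => (A * Bᵀ) ^ i * (A * Cᵀ * B) * (Aᵀ * B) ^ i
    with hg_def
  set h : ℕ → Matrix (Fin m) (Fin n) ℂ := fun i => (A * Bᵀ) ^ i * C * (Aᵀ * B) ^ i with hh_def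
  have hg : Summable g := tStein_summable A B _ hρ
  have hh : Summable h := tStein_summable A B _ hρ
  set G := ∑' i, g i with hG_def
  set H := ∑' i, h i with hH_def
  have hfgh : ∀ i : ℕ, (A * Bᵀ) ^ i * (A * Cᵀ * B + C) * (Aᵀ * B) ^ i = g i + h i := by
    intro i; simp only [hg_def, hh_def, Matrix.mul_add, Matrix.add_mul]
  set X := G + H with hX_def
  have hXsum : HasSum (fun i : ℕ => (A * Bᵀ) ^ i * (A * Cᵀ * B + C) * (Aᵀ * B) ^ i) X := by
    have := hg.hasSum.add hh.hasSum
    simpa only [← hfgh] using this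
  have hcont : Continuous (fun M : Matrix (Fin m) (Fin n) ℂ => A * Mᵀ * B) :=
    (continuous_const.matrix_mul continuous_id.matrix_transpose).matrix_mul continuous_const
  have hmap : HasSum (fun i : ℕ =>
      A * ((A * Bᵀ) ^ i * (A * Cᵀ * B + C) * (Aᵀ * B) ^ i)ᵀ * B) (A * Xᵀ * B) :=
    hXsum.map
      ({ toFun := fun M => A * Mᵀ * B
         map_zero' := by simp
         map_add' := fun x y => by
           simp [Matrix.transpose_add, Matrix.mul_add, Matrix.add_mul] } :
        Matrix (Fin m) (Fin n) ℂ →+ Matrix (Fin m) (Fin n) ℂ) hcont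
  have hterm : ∀ i : ℕ, A * ((A * Bᵀ) ^ i * (A * Cᵀ * B + C) * (Aᵀ * B) ^ i)ᵀ * B
      = g i + h (i + 1) := by
    intro i
    rw [tStein_conj]
    have hD : A * (A * Cᵀ * B + C)ᵀ * B = A * Cᵀ * B + A * Bᵀ * C * (Aᵀ * B) := by
      simp [Matrix.transpose_add, Matrix.transpose_mul, Matrix.mul_add, Matrix.add_mul,
        Matrix.mul_assoc, add_comm]
    rw [hD, Matrix.mul_add, Matrix.add_mul, hg_def, hh_def]
    congr 1
    exact (tStein_pow_succ A B C i).symm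
  rw [show (fun i : ℕ => A * ((A * Bᵀ) ^ i * (A * Cᵀ * B + C) * (Aᵀ * B) ^ i)ᵀ * B)
      = fun i => g i + h (i + 1) from funext hterm] at hmap
  have hshift : HasSum (fun i : ℕ => h (i + 1)) (H - ∑ i ∈ Finset.range 1, h i) :=
    (hasSum_nat_add_iff' 1).2 hh.hasSum
  have hsum2 : HasSum (fun i : ℕ => g i + h (i + 1))
      (G + (H - ∑ i ∈ Finset.range 1, h i)) := hg.hasSum.add hshift
  have h0 : ∑ i ∈ Finset.range 1, h i = C := by simp [hh_def]
  have hEq : A * Xᵀ * B = G + (H - C) := by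
    have := hmap.unique hsum2
    rwa [h0] at this
  have hXeq : X = A * Xᵀ * B + C := by
    rw [hEq, hX_def]; abel
  refine ⟨X, hXsum, hXeq, ?_⟩
  intro Y hY
  have hE : Y - X = A * (Y - X)ᵀ * B := by
    calc Y - X = A * Yᵀ * B + C - (A * Xᵀ * B + C) := by rw [← hY, ← hXeq]
      _ = A * (Y - X)ᵀ * B := by
          simp only [Matrix.transpose_sub, Matrix.mul_sub, Matrix.sub_mul]
          abel
  have hT : (Y - X)ᵀ = Bᵀ * (Y - X) * Aᵀ := by
    conv_lhs => rw [hE]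
    simp [Matrix.transpose_mul, Matrix.mul_assoc]
  have hE2 : Y - X = A * Bᵀ * (Y - X) * (Aᵀ * B) := by
    conv_lhs => rw [hE, hT]
    simp [Matrix.mul_assoc]
  have hiter : ∀ k : ℕ, Y - X = (A * Bᵀ) ^ k * (Y - X) * (Aᵀ * B) ^ k := by
    intro k
    induction k with
    | zero => simp
    | succ k ih =>
      rw [tStein_pow_succ, ← hE2, ← ih]
  have hS := (tStein_summable A B (Y - X) hρ).tendsto_atTop_zero
  have hconst : Tendsto (fun _ : ℕ => Y - X) atTop (nhds 0) :=
    hS.congr fun k => (hiter k).symm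
  have : Y - X = 0 := tendsto_nhds_unique tendsto_const_nhds hconst
  rw [← sub_eq_zero]
  exact this

end TSteinAux

/-- **Convergence of the Smith-type series.** If the spectral radius of `AᵀB`
is less than `1`, then the series `Σ_{i=0}^∞ (ABᵀ)ⁱ (ACᵀB + C) (AᵀB)ⁱ`
converges, and its sum is the unique solution of the ⊤-Stein equation
`X = A Xᵀ B + C`. -/
theorem tStein_series_solution (m n : ℕ) (A B C : Matrix (Fin m) (Fin n) ℂ)
    (hρ : spectralRadius ℂ (Aᵀ * B) < 1) :
    ∃ X : Matrix (Fin m) (Fin n) ℂ,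
      HasSum (fun i : ℕ => (A * Bᵀ) ^ i * (A * Cᵀ * B + C) * (Aᵀ * B) ^ i) X ∧
      X = A * Xᵀ * B + C ∧
      ∀ Y : Matrix (Fin m) (Fin n) ℂ, Y = A * Yᵀ * B + C → Y = X :=
  tStein_main A B C hρ
end

section
/- Let A, B, C ∈ ℂ^{m×n} and let r ≥ 2 be an integer. Define the r-Smith iteration by X₀ = A Cᵀ B + C, A₀ = ABᵀ, B₀ = AᵀB, and for k ≥ 0: X_{k+1} = Σ_{i=0}^{r−1} A_kⁱ X_k B_kⁱ, A_{k+1} = A_kʳ, B_{k+1} = B_kʳ. Then for every k ≥ 0, X_k = Σ_{i=0}^{r^k − 1} (ABᵀ)ⁱ (A Cᵀ B + C) (AᵀB)ⁱ, and if ρ(AᵀB) < 1 the sequence (X_k) converges to the unique solution of the ⊤-Stein equation X = A Xᵀ B + C. -/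
open Matrix Filter

/-- The coefficient sequence `A₀ = ABᵀ`, `A_{k+1} = A_kʳ` of the `r`-Smith iteration. -/
noncomputable def smithA {m n : ℕ} (A B : Matrix (Fin m) (Fin n) ℂ) (r : ℕ) :
    ℕ → Matrix (Fin m) (Fin m) ℂ
  | 0 => A * Bᵀ
  | k + 1 => smithA A B r k ^ r

/-- The coefficient sequence `B₀ = AᵀB`, `B_{k+1} = B_kʳ` of the `r`-Smith iteration. -/
noncomputable def smithB {m n : ℕ} (A B : Matrix (Fin m) (Fin n) ℂ) (r : ℕ) :
    ℕ → Matrix (Fin n) (Fin n) ℂ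
  | 0 => Aᵀ * B
  | k + 1 => smithB A B r k ^ r

/-- The `r`-Smith iterates: `X₀ = ACᵀB + C`, `X_{k+1} = Σ_{i=0}^{r-1} A_kⁱ X_k B_kⁱ`. -/
noncomputable def smithX {m n : ℕ} (A B C : Matrix (Fin m) (Fin n) ℂ) (r : ℕ) :
    ℕ → Matrix (Fin m) (Fin n) ℂ
  | 0 => A * Cᵀ * B + C
  | k + 1 => ∑ i ∈ Finset.range r, smithA A B r k ^ i * smithX A B C r k * smithB A B r k ^ i

private lemma sum_range_mul_eq {M : Type*} [AddCommMonoid M] (f : ℕ → M) (a b : ℕ) :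
    ∑ l ∈ Finset.range (a * b), f l
      = ∑ i ∈ Finset.range a, ∑ j ∈ Finset.range b, f (i * b + j) := by
  induction a with
  | zero => simp
  | succ a ih =>
      rw [Nat.succ_mul, Finset.sum_range_add, ih, Finset.sum_range_succ]

private lemma smithA_eq {m n : ℕ} (A B : Matrix (Fin m) (Fin n) ℂ) (r : ℕ) (k : ℕ) :
    smithA A B r k = (A * Bᵀ) ^ r ^ k := by
  induction k with
  | zero => simp [smithA]
  | succ k ih => rw [smithA, ih, ← pow_mul, pow_succ]

private lemma smithB_eq {m n : ℕ} (A B : Matrix (Fin m) (Fin n) ℂ) (r : ℕ) (k : ℕ) :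
    smithB A B r k = (Aᵀ * B) ^ r ^ k := by
  induction k with
  | zero => simp [smithB]
  | succ k ih => rw [smithB, ih, ← pow_mul, pow_succ]

private lemma smithX_eq {m n : ℕ} (A B C : Matrix (Fin m) (Fin n) ℂ) (r : ℕ) (k : ℕ) :
    smithX A B C r k =
      ∑ i ∈ Finset.range (r ^ k), (A * Bᵀ) ^ i * (A * Cᵀ * B + C) * (Aᵀ * B) ^ i := by
  induction k with
  | zero => simp [smithX]
  | succ k ih =>
      rw [smithX, smithA_eq, smithB_eq, ih, pow_succ', sum_range_mul_eq]
      refine Finset.sum_congr rfl fun i _ => ?_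
      rw [Matrix.mul_sum, Matrix.sum_mul]
      refine Finset.sum_congr rfl fun j _ => ?_
      rw [← pow_mul, ← pow_mul, show i * r ^ k + j = r ^ k * i + j from by ring,
        pow_add, pow_add, pow_mul_comm (Aᵀ * B) (r ^ k * i) j]
      simp only [Matrix.mul_assoc]


section Part2
open scoped NNReal ENNReal

attribute [local instance] Matrix.linftyOpNormedAddCommGroup Matrix.linftyOpNormedRing
  Matrix.linftyOpNormedAlgebra Matrix.linftyOpNormedSpace

-- entrywise bound
private lemma entry_nnnorm_le {p q : ℕ} (X : Matrix (Fin p) (Fin q) ℂ) (i : Fin p) (j : Fin q) :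
    ‖X i j‖₊ ≤ ‖X‖₊ := by
  rw [Matrix.linfty_opNNNorm_def]
  calc ‖X i j‖₊ ≤ ∑ j', ‖X i j'‖₊ :=
        Finset.single_le_sum (f := fun j' => ‖X i j'‖₊) (fun _ _ => zero_le) (Finset.mem_univ j)
  _ ≤ _ := Finset.le_sup (f := fun i => ∑ j', ‖X i j'‖₊) (Finset.mem_univ i)

private lemma nnnorm_transpose_le {p q : ℕ} (X : Matrix (Fin p) (Fin q) ℂ) :
    ‖Xᵀ‖₊ ≤ p * ‖X‖₊ := by
  rw [Matrix.linfty_opNNNorm_def]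
  refine Finset.sup_le fun j _ => ?_
  calc ∑ i, ‖Xᵀ j i‖₊ = ∑ i : Fin p, ‖X i j‖₊ := rfl
  _ ≤ ∑ _i : Fin p, ‖X‖₊ := Finset.sum_le_sum fun i _ => entry_nnnorm_le X i j
  _ = p * ‖X‖₊ := by simp [Finset.sum_const, mul_comm]

private lemma ev_pow_le {p : ℕ} (N : Matrix (Fin p) (Fin p) ℂ)
    (h : spectralRadius ℂ N < 1) :
    ∃ t : ℝ≥0, t < 1 ∧ ∀ᶠ i in atTop, ‖N ^ i‖₊ ≤ t ^ i := by
  letI : CompleteSpace (Matrix (Fin p) (Fin p) ℂ) := FiniteDimensional.complete ℂ _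
  obtain ⟨t, ht₁, ht₂⟩ := ENNReal.lt_iff_exists_nnreal_btwn.mp h
  refine ⟨t, by exact_mod_cast ht₂, ?_⟩
  have hG := spectrum.pow_nnnorm_pow_one_div_tendsto_nhds_spectralRadius N
  filter_upwards [hG.eventually_lt_const ht₁, eventually_ge_atTop 1] with i hi h1
  have hi0 : (i : ℝ) ≠ 0 := Nat.cast_ne_zero.mpr (by omega)
  have hx : (‖N ^ i‖₊ : ℝ≥0∞) = ((‖N ^ i‖₊ : ℝ≥0∞) ^ (1 / (i : ℝ))) ^ (i : ℝ) := by
    rw [← ENNReal.rpow_mul, one_div, inv_mul_cancel₀ hi0, ENNReal.rpow_one]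
  have h2 : (‖N ^ i‖₊ : ℝ≥0∞) ≤ (t : ℝ≥0∞) ^ (i : ℝ) := by
    rw [hx]; exact ENNReal.rpow_le_rpow hi.le (Nat.cast_nonneg i)
  rw [ENNReal.rpow_natCast, ← ENNReal.coe_pow, ENNReal.coe_le_coe] at h2
  exact h2

private lemma stein_unique {p q : ℕ} (M : Matrix (Fin p) (Fin p) ℂ)
    (Nt : Matrix (Fin q) (Fin q) ℂ)
    (h0 : Tendsto (fun k => ‖M ^ k‖ * ‖Nt ^ k‖) atTop (nhds 0))
    (D : Matrix (Fin p) (Fin q) ℂ) (hD : D = M * D * Nt) : D = 0 := by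
  have hk : ∀ k, D = M ^ k * D * Nt ^ k := by
    intro k
    induction k with
    | zero => simp
    | succ k ih =>
        calc D = M ^ k * D * Nt ^ k := ih
        _ = M ^ k * (M * D * Nt) * Nt ^ k := by rw [← hD]
        _ = (M ^ k * M) * D * (Nt * Nt ^ k) := by simp only [Matrix.mul_assoc]
        _ = M ^ (k + 1) * D * Nt ^ (k + 1) := by rw [← pow_succ, ← pow_succ']
  have hb : ∀ k, ‖D‖ ≤ ‖M ^ k‖ * ‖Nt ^ k‖ * ‖D‖ := by
    intro k
    calc ‖D‖ = ‖M ^ k * D * Nt ^ k‖ := by rw [← hk k]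
    _ ≤ ‖M ^ k * D‖ * ‖Nt ^ k‖ := Matrix.linfty_opNorm_mul _ _
    _ ≤ ‖M ^ k‖ * ‖D‖ * ‖Nt ^ k‖ :=
        mul_le_mul_of_nonneg_right (Matrix.linfty_opNorm_mul _ _) (norm_nonneg _)
    _ = ‖M ^ k‖ * ‖Nt ^ k‖ * ‖D‖ := by ring
  have h0' : Tendsto (fun k => ‖M ^ k‖ * ‖Nt ^ k‖ * ‖D‖) atTop (nhds 0) := by
    simpa using h0.mul_const ‖D‖
  have : ‖D‖ ≤ 0 := ge_of_tendsto' h0' hb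
  simpa [norm_le_zero_iff] using this
end Part2

section Part2b
open scoped NNReal ENNReal

attribute [local instance] Matrix.linftyOpNormedAddCommGroup Matrix.linftyOpNormedRing
  Matrix.linftyOpNormedAlgebra Matrix.linftyOpNormedSpace

set_option maxHeartbeats 1000000 in
private lemma part2_main {m n : ℕ} (A B C : Matrix (Fin m) (Fin n) ℂ)
    (h : spectralRadius ℂ (Aᵀ * B) < 1) :
    ∃ X : Matrix (Fin m) (Fin n) ℂ,
      (X = A * Xᵀ * B + C ∧
        ∀ Y : Matrix (Fin m) (Fin n) ℂ, Y = A * Yᵀ * B + C → Y = X) ∧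
      Tendsto (fun K => ∑ i ∈ Finset.range K,
          (A * Bᵀ) ^ i * (A * Cᵀ * B + C) * (Aᵀ * B) ^ i) atTop (nhds X) := by
  letI : CompleteSpace (Matrix (Fin m) (Fin n) ℂ) := FiniteDimensional.complete ℂ _
  set M : Matrix (Fin m) (Fin m) ℂ := A * Bᵀ with hM
  set Nt : Matrix (Fin n) (Fin n) ℂ := Aᵀ * B with hNt
  set C₀ : Matrix (Fin m) (Fin n) ℂ := A * Cᵀ * B + C with hC₀
  set T : ℕ → Matrix (Fin m) (Fin n) ℂ := fun i => M ^ i * C₀ * Nt ^ i with hT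
  obtain ⟨t, ht1, hev⟩ := ev_pow_le Nt h
  have ht1' : (t : ℝ) < 1 := ht1
  -- powers of M in terms of powers of Nt
  have hMpow : ∀ j : ℕ, M ^ (j + 1) = A * (Bᵀ * A) ^ j * Bᵀ := by
    intro j
    induction j with
    | zero => simp [hM]
    | succ j ih =>
        rw [pow_succ, ih, pow_succ, hM]
        simp only [Matrix.mul_assoc]
  have hBA : ∀ j : ℕ, (Bᵀ * A) ^ j = (Nt ^ j)ᵀ := by
    intro j
    rw [Matrix.transpose_pow, hNt, Matrix.transpose_mul, Matrix.transpose_transpose]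
  have hMn : ∀ j : ℕ, ‖M ^ (j + 1)‖₊ ≤ ‖A‖₊ * ((n : ℝ≥0) * ‖Nt ^ j‖₊) * ‖Bᵀ‖₊ := by
    intro j
    rw [hMpow j, hBA j]
    calc ‖A * (Nt ^ j)ᵀ * Bᵀ‖₊ ≤ ‖A * (Nt ^ j)ᵀ‖₊ * ‖Bᵀ‖₊ := Matrix.linfty_opNNNorm_mul _ _
    _ ≤ ‖A‖₊ * ‖(Nt ^ j)ᵀ‖₊ * ‖Bᵀ‖₊ :=
        mul_le_mul' (Matrix.linfty_opNNNorm_mul _ _) le_rfl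
    _ ≤ ‖A‖₊ * ((n : ℝ≥0) * ‖Nt ^ j‖₊) * ‖Bᵀ‖₊ :=
        mul_le_mul' (mul_le_mul' le_rfl (nnnorm_transpose_le _)) le_rfl
  -- the eventual geometric bound for T
  have hTb : ∀ᶠ j in atTop, ‖T (j + 1)‖₊ ≤
      (‖A‖₊ * ((n : ℝ≥0) * 1) * ‖Bᵀ‖₊ * ‖C₀‖₊) * t ^ (j + 1) := by
    filter_upwards [hev, (tendsto_add_atTop_nat 1).eventually hev] with j hj hj1
    calc ‖T (j + 1)‖₊ ≤ ‖M ^ (j + 1) * C₀‖₊ * ‖Nt ^ (j + 1)‖₊ :=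
          Matrix.linfty_opNNNorm_mul _ _
    _ ≤ ‖M ^ (j + 1)‖₊ * ‖C₀‖₊ * ‖Nt ^ (j + 1)‖₊ :=
        mul_le_mul' (Matrix.linfty_opNNNorm_mul _ _) le_rfl
    _ ≤ (‖A‖₊ * ((n : ℝ≥0) * ‖Nt ^ j‖₊) * ‖Bᵀ‖₊) * ‖C₀‖₊ * t ^ (j + 1) :=
        mul_le_mul' (mul_le_mul' (hMn j) le_rfl) hj1
    _ ≤ (‖A‖₊ * ((n : ℝ≥0) * 1) * ‖Bᵀ‖₊) * ‖C₀‖₊ * t ^ (j + 1) := by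
        refine mul_le_mul' (mul_le_mul' (mul_le_mul' (mul_le_mul' le_rfl
          (mul_le_mul' le_rfl (hj.trans (pow_le_one₀ zero_le ht1.le)))) le_rfl) le_rfl) le_rfl
    _ = (‖A‖₊ * ((n : ℝ≥0) * 1) * ‖Bᵀ‖₊ * ‖C₀‖₊) * t ^ (j + 1) := by ring
  have hTb' : ∀ᶠ i in atTop, ‖T i‖ ≤
      ((‖A‖₊ * ((n : ℝ≥0) * 1) * ‖Bᵀ‖₊ * ‖C₀‖₊ : ℝ≥0) : ℝ) * (t : ℝ) ^ i := by
    obtain ⟨J, hJ⟩ := eventually_atTop.mp hTb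
    refine eventually_atTop.mpr ⟨J + 1, fun i hi => ?_⟩
    obtain ⟨j, rfl⟩ : ∃ j, i = j + 1 := ⟨i - 1, by omega⟩
    have := hJ j (by omega)
    calc ‖T (j + 1)‖ = ((‖T (j + 1)‖₊ : ℝ≥0) : ℝ) := rfl
    _ ≤ _ := by push_cast; exact_mod_cast this
  have hO : (fun i => T i) =O[atTop] (fun i => (t : ℝ) ^ i) := by
    rw [Asymptotics.isBigO_iff]
    refine ⟨((‖A‖₊ * ((n : ℝ≥0) * 1) * ‖Bᵀ‖₊ * ‖C₀‖₊ : ℝ≥0) : ℝ), ?_⟩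
    filter_upwards [hTb'] with i hi
    rwa [Real.norm_of_nonneg (pow_nonneg t.coe_nonneg i)]
  have hsum : Summable T :=
    summable_of_isBigO_nat (summable_geometric_of_lt_one t.coe_nonneg ht1') hO
  set X : Matrix (Fin m) (Fin n) ℂ := ∑' i, T i with hX
  have hTend : Tendsto (fun K => ∑ i ∈ Finset.range K, T i) atTop (nhds X) :=
    hsum.hasSum.tendsto_sum_nat
  -- the matrix `X` solves the ordinary Stein equation
  have hrec : ∀ K, (∑ i ∈ Finset.range (K + 1), T i)
      = M * (∑ i ∈ Finset.range K, T i) * Nt + C₀ := by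
    intro K
    rw [Finset.sum_range_succ']
    have h0 : T 0 = C₀ := by simp [hT]
    rw [h0, Matrix.mul_sum, Matrix.sum_mul]
    congr 1
    refine Finset.sum_congr rfl fun i _ => ?_
    rw [hT]
    simp only
    rw [pow_succ' M, pow_succ Nt]
    simp only [Matrix.mul_assoc]
  have hlip1 : LipschitzWith ‖M‖₊ (fun Y : Matrix (Fin m) (Fin n) ℂ => M * Y) := by
    refine LipschitzWith.of_dist_le_mul fun x y => ?_
    rw [dist_eq_norm, dist_eq_norm, ← Matrix.mul_sub]
    exact_mod_cast Matrix.linfty_opNorm_mul M (x - y)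
  have hlip2 : LipschitzWith ‖Nt‖₊ (fun Y : Matrix (Fin m) (Fin n) ℂ => Y * Nt) := by
    refine LipschitzWith.of_dist_le_mul fun x y => ?_
    rw [dist_eq_norm, dist_eq_norm, ← Matrix.sub_mul]
    calc ‖(x - y) * Nt‖ ≤ ‖x - y‖ * ‖Nt‖ := Matrix.linfty_opNorm_mul _ _
    _ = (‖Nt‖₊ : ℝ) * ‖x - y‖ := by rw [coe_nnnorm]; ring
  have hcont : Continuous fun Y : Matrix (Fin m) (Fin n) ℂ => M * Y * Nt + C₀ := by
    exact ((hlip2.continuous.comp hlip1.continuous).add continuous_const)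
  have hXStein : X = M * X * Nt + C₀ := by
    have hl : Tendsto (fun K => ∑ i ∈ Finset.range (K + 1), T i) atTop (nhds X) :=
      hTend.comp (tendsto_add_atTop_nat 1)
    have hr' : Tendsto (fun K => M * (∑ i ∈ Finset.range K, T i) * Nt + C₀) atTop
        (nhds (M * X * Nt + C₀)) := (hcont.tendsto X).comp hTend
    rw [funext hrec] at hl
    exact tendsto_nhds_unique hl hr'
  -- decay of the coefficient norms
  have h0 : Tendsto (fun k => ‖M ^ k‖ * ‖Nt ^ k‖) atTop (nhds 0) := by
    have hb : ∀ᶠ k in atTop, ‖M ^ k‖ * ‖Nt ^ k‖ ≤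
        ((‖A‖₊ * ((n : ℝ≥0) * 1) * ‖Bᵀ‖₊ : ℝ≥0) : ℝ) * (t : ℝ) ^ k := by
      have hb0 : ∀ᶠ j in atTop, ‖M ^ (j + 1)‖₊ * ‖Nt ^ (j + 1)‖₊ ≤
          (‖A‖₊ * ((n : ℝ≥0) * 1) * ‖Bᵀ‖₊) * t ^ (j + 1) := by
        filter_upwards [hev, (tendsto_add_atTop_nat 1).eventually hev] with j hj hj1
        calc ‖M ^ (j + 1)‖₊ * ‖Nt ^ (j + 1)‖₊
            ≤ (‖A‖₊ * ((n : ℝ≥0) * ‖Nt ^ j‖₊) * ‖Bᵀ‖₊) * t ^ (j + 1) :=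
              mul_le_mul' (hMn j) hj1
        _ ≤ _ := mul_le_mul' (mul_le_mul' (mul_le_mul' le_rfl (mul_le_mul' le_rfl
              (hj.trans (pow_le_one₀ zero_le ht1.le)))) le_rfl) le_rfl
      obtain ⟨J, hJ⟩ := eventually_atTop.mp hb0
      refine eventually_atTop.mpr ⟨J + 1, fun k hk => ?_⟩
      obtain ⟨j, rfl⟩ : ∃ j, k = j + 1 := ⟨k - 1, by omega⟩
      have := hJ j (by omega)
      calc ‖M ^ (j + 1)‖ * ‖Nt ^ (j + 1)‖
          = ((‖M ^ (j + 1)‖₊ * ‖Nt ^ (j + 1)‖₊ : ℝ≥0) : ℝ) := by push_cast; rfl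
      _ ≤ _ := by push_cast; exact_mod_cast this
    refine squeeze_zero' (Eventually.of_forall fun k =>
      mul_nonneg (norm_nonneg _) (norm_nonneg _)) hb ?_
    have := (tendsto_pow_atTop_nhds_zero_of_lt_one t.coe_nonneg ht1').const_mul
      ((‖A‖₊ * ((n : ℝ≥0) * 1) * ‖Bᵀ‖₊ : ℝ≥0) : ℝ)
    simpa using this
  -- uniqueness of Stein solutions
  have huniq : ∀ Z : Matrix (Fin m) (Fin n) ℂ, Z = M * Z * Nt + C₀ → Z = X := by
    intro Z hZ
    have hD : Z - X = M * (Z - X) * Nt := by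
      calc Z - X = (M * Z * Nt + C₀) - (M * X * Nt + C₀) := by rw [← hZ, ← hXStein]
      _ = M * Z * Nt - M * X * Nt := by abel
      _ = M * (Z - X) * Nt := by rw [Matrix.mul_sub, Matrix.sub_mul]
    have := stein_unique M Nt h0 (Z - X) hD
    exact sub_eq_zero.mp this
  -- X solves the transpose-Stein equation
  have hXT : X = A * Xᵀ * B + C := by
    have hY2 : A * Xᵀ * B + C = M * (A * Xᵀ * B + C) * Nt + C₀ := by
      have hXt : Xᵀ = (M * X * Nt + C₀)ᵀ := by rw [← hXStein]
      conv_lhs => rw [hXt]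
      rw [hM, hNt, hC₀]
      simp only [Matrix.transpose_add, Matrix.transpose_mul, Matrix.transpose_transpose,
        Matrix.mul_add, Matrix.add_mul, Matrix.mul_assoc, add_assoc]
    exact (huniq _ hY2).symm
  refine ⟨X, ⟨hXT, fun Y hY => ?_⟩, hTend⟩
  have hYt : Yᵀ = Bᵀ * Y * Aᵀ + Cᵀ := by
    conv_lhs => rw [hY]
    rw [Matrix.transpose_add, Matrix.transpose_mul, Matrix.transpose_mul,
      Matrix.transpose_transpose]
    simp only [Matrix.mul_assoc]
  refine huniq Y ?_
  calc Y = A * Yᵀ * B + C := hY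
  _ = A * (Bᵀ * Y * Aᵀ + Cᵀ) * B + C := by rw [hYt]
  _ = M * Y * Nt + C₀ := by
      rw [hM, hNt, hC₀]
      simp only [Matrix.mul_add, Matrix.add_mul, Matrix.mul_assoc, add_assoc]

end Part2b



set_option maxHeartbeats 1000000 in
/-- **The `r`-Smith iteration.** For every `k`,
`X_k = Σ_{i=0}^{r^k - 1} (ABᵀ)ⁱ (ACᵀB + C) (AᵀB)ⁱ`, and if `ρ(AᵀB) < 1` the
iterates converge to the unique solution of the ⊤-Stein equation `X = AXᵀB + C`. -/
theorem rSmith_iteration (m n : ℕ) (A B C : Matrix (Fin m) (Fin n) ℂ) (r : ℕ) (hr : 2 ≤ r) :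
    (∀ k : ℕ,
      smithX A B C r k =
        ∑ i ∈ Finset.range (r ^ k), (A * Bᵀ) ^ i * (A * Cᵀ * B + C) * (Aᵀ * B) ^ i) ∧
    (spectralRadius ℂ (Aᵀ * B) < 1 →
      ∃ X : Matrix (Fin m) (Fin n) ℂ,
        (X = A * Xᵀ * B + C ∧
          ∀ Y : Matrix (Fin m) (Fin n) ℂ, Y = A * Yᵀ * B + C → Y = X) ∧
        Tendsto (smithX A B C r) atTop (nhds X)) := by
  refine ⟨fun k => smithX_eq A B C r k, fun h => ?_⟩
  obtain ⟨X, hX, hTend⟩ := part2_main A B C h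
  refine ⟨X, hX, ?_⟩
  have hpow : Tendsto (fun k => r ^ k) atTop atTop :=
    tendsto_pow_atTop_atTop_of_one_lt (by omega)
  have hcomp := hTend.comp hpow
  have hfun : smithX A B C r = fun k => ∑ i ∈ Finset.range (r ^ k),
      (A * Bᵀ) ^ i * (A * Cᵀ * B + C) * (Aᵀ * B) ^ i := funext (smithX_eq A B C r)
  rw [hfun]
  exact hcomp
end
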